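/- arXiv:2512.09733 — 9 statements merged into one kernel-verified Lean document; each statement's English description precedes it below -/
import Mathlib

section
/- Suppose f : ℝ → ℝ is continuous, one-sided Lipschitz and locally Lipschitz with polynomial growth of the local Lipschitz constant, let φ be its flow, and define ψ_s(z) = (φ_s(z) − z)/s for s > 0 and ψ_0 = f. Then there exists a constant C ∈ (0,∞) such that for all s ∈ [0,1] and all z₁, z₂ ∈ ℝ one has (z₂ − z₁)(ψ_s(z₂) − ψ_s(z₁)) ≤ C (z₂ − z₁)². -/
open Real Set

theorem gron_key (f : ℝ → ℝ) (hf : Continuous f)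
    (Lf : ℝ) (hLf : 0 ≤ Lf)
    (hosl : ∀ z₁ z₂ : ℝ, (z₂ - z₁) * (f z₂ - f z₁) ≤ Lf * (z₂ - z₁) ^ 2)
    (φ : ℝ → ℝ → ℝ)
    (hφ0 : ∀ z : ℝ, φ 0 z = z)
    (hφ' : ∀ z : ℝ, ∀ s : ℝ, 0 ≤ s →
      HasDerivWithinAt (fun u => φ u z) (f (φ s z)) (Set.Ici 0) s)
    (z₁ z₂ : ℝ) (s : ℝ) (hs : s ∈ Icc (0:ℝ) 1) :
    |φ s z₂ - φ s z₁| ≤ exp (Lf * s) * |z₂ - z₁| := by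
  set g : ℝ → ℝ := fun u => (φ u z₂ - φ u z₁) ^ 2 with hg
  have hc : ∀ z, ContinuousOn (fun u => φ u z) (Icc 0 1) := by
    intro z
    exact fun u hu => ((hφ' z u hu.1).continuousWithinAt).mono (fun x hx => hx.1)
  have hgc : ContinuousOn g (Icc 0 1) := ((hc z₂).sub (hc z₁)).pow 2
  have hder : ∀ u ∈ Ico (0:ℝ) 1, HasDerivWithinAt g
      (2 * (φ u z₂ - φ u z₁) * (f (φ u z₂) - f (φ u z₁))) (Ici u) u := by
    intro u hu
    have h1 := ((hφ' z₂ u hu.1).sub (hφ' z₁ u hu.1)).mono (Ici_subset_Ici.2 hu.1)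
    have := h1.pow 2
    convert this using 1
    · rfl
    · rfl
    · rfl
    · simp only [Pi.sub_apply]; norm_num
  have key := le_gronwallBound_of_liminf_deriv_right_le (f := g)
    (f' := fun u => 2 * (φ u z₂ - φ u z₁) * (f (φ u z₂) - f (φ u z₁)))
    (δ := (z₂ - z₁)^2) (K := 2 * Lf) (ε := 0) (a := 0) (b := 1) hgc
    (fun x hx r hr => by
      have := (hder x hx).liminf_right_slope_le hr
      refine this.mono (fun z hz => ?_)
      rwa [slope_def_field, div_eq_inv_mul] at hz)
    (by simp [hg, hφ0])
    (fun x hx => by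
      have := hosl (φ x z₁) (φ x z₂)
      simp only [hg]
      nlinarith [this])
    s hs
  rw [gronwallBound_ε0, sub_zero] at key
  have h2 : (φ s z₂ - φ s z₁)^2 ≤ (exp (Lf * s) * |z₂ - z₁|)^2 := by
    calc (φ s z₂ - φ s z₁)^2 ≤ (z₂ - z₁)^2 * exp (2 * Lf * s) := key
    _ = (exp (Lf * s) * |z₂ - z₁|)^2 := by
        rw [mul_pow, ← Real.exp_nat_mul, sq_abs]; ring_nf
  nlinarith [abs_nonneg (φ s z₂ - φ s z₁), sq_abs (φ s z₂ - φ s z₁),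
    exp_pos (Lf * s), abs_nonneg (z₂ - z₁),
    mul_nonneg (exp_pos (Lf * s)).le (abs_nonneg (z₂ - z₁))]

/-- If `f : ℝ → ℝ` is continuous, one-sided Lipschitz and locally Lipschitz with polynomial
growth of the local Lipschitz constant, `φ` is its flow and `ψ s z = (φ s z - z)/s` for
`s > 0`, `ψ 0 = f`, then there is `C ∈ (0,∞)` such that for all `s ∈ [0,1]` and all
`z₁, z₂ ∈ ℝ`, `(z₂ - z₁) * (ψ s z₂ - ψ s z₁) ≤ C * (z₂ - z₁)^2`. -/
theorem stmt1
    (f : ℝ → ℝ) (hf : Continuous f)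
    (Lf : ℝ) (hLf : 0 ≤ Lf)
    (hosl : ∀ z₁ z₂ : ℝ, (z₂ - z₁) * (f z₂ - f z₁) ≤ Lf * (z₂ - z₁) ^ 2)
    (q : ℕ)
    (hloc : ∀ z₁ z₂ : ℝ,
      |f z₂ - f z₁| ≤ Lf * (1 + |z₁| ^ (2 * q) + |z₂| ^ (2 * q)) * |z₂ - z₁|)
    (φ : ℝ → ℝ → ℝ)
    (hφ0 : ∀ z : ℝ, φ 0 z = z)
    (hφ' : ∀ z : ℝ, ∀ s : ℝ, 0 ≤ s →
      HasDerivWithinAt (fun u => φ u z) (f (φ s z)) (Set.Ici 0) s)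
    (ψ : ℝ → ℝ → ℝ)
    (hψ0 : ∀ z : ℝ, ψ 0 z = f z)
    (hψ : ∀ s : ℝ, 0 < s → ∀ z : ℝ, ψ s z = (φ s z - z) / s) :
    ∃ C : ℝ, 0 < C ∧ ∀ s ∈ Set.Icc (0:ℝ) 1, ∀ z₁ z₂ : ℝ,
      (z₂ - z₁) * (ψ s z₂ - ψ s z₁) ≤ C * (z₂ - z₁) ^ 2 := by
  refine ⟨Lf * exp Lf + 1, by positivity, ?_⟩
  intro s hs z₁ z₂
  rcases eq_or_lt_of_le hs.1 with h0 | h0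
  · -- s = 0
    rw [← h0]
    simp only [hψ0]
    have hC : Lf ≤ Lf * exp Lf + 1 := by
      nlinarith [mul_le_mul_of_nonneg_left (Real.one_le_exp hLf) hLf]
    calc (z₂ - z₁) * (f z₂ - f z₁) ≤ Lf * (z₂ - z₁) ^ 2 := hosl z₁ z₂
      _ ≤ (Lf * exp Lf + 1) * (z₂ - z₁) ^ 2 :=
        mul_le_mul_of_nonneg_right hC (sq_nonneg _)
  · -- s > 0
    rw [hψ s h0 z₁, hψ s h0 z₂]
    have hb := gron_key f hf Lf hLf hosl φ hφ0 hφ' z₁ z₂ s hs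
    -- (z₂ - z₁) * ((φ s z₂ - z₂)/s - (φ s z₁ - z₁)/s)
    have step1 : (z₂ - z₁) * (φ s z₂ - φ s z₁) ≤ exp (Lf * s) * (z₂ - z₁)^2 := by
      calc (z₂ - z₁) * (φ s z₂ - φ s z₁) ≤ |z₂ - z₁| * |φ s z₂ - φ s z₁| := by
            rw [← abs_mul]; exact le_abs_self _
        _ ≤ |z₂ - z₁| * (exp (Lf * s) * |z₂ - z₁|) := by
            exact mul_le_mul_of_nonneg_left hb (abs_nonneg _)
        _ = exp (Lf * s) * (z₂ - z₁)^2 := by rw [← sq_abs]; ring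
    have hexp : exp (Lf * s) - 1 ≤ Lf * exp Lf * s := by
      have h1 : 1 - Lf * s ≤ exp (-(Lf * s)) := by
        have := Real.add_one_le_exp (-(Lf * s)); linarith
      have h2 : exp (Lf * s) * (1 - Lf * s) ≤ 1 := by
        calc exp (Lf * s) * (1 - Lf * s) ≤ exp (Lf * s) * exp (-(Lf * s)) :=
              mul_le_mul_of_nonneg_left h1 (exp_pos _).le
          _ = 1 := by rw [← Real.exp_add]; simp
      have h3 : exp (Lf * s) ≤ exp Lf :=
        Real.exp_le_exp.2 (by nlinarith [hs.2])
      nlinarith [mul_nonneg hLf h0.le, exp_pos (Lf * s)]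
    have key : (z₂ - z₁) * ((φ s z₂ - φ s z₁) - (z₂ - z₁)) ≤
        (Lf * exp Lf * s) * (z₂ - z₁)^2 := by
      nlinarith [sq_nonneg (z₂ - z₁)]
    have hfinal : (z₂ - z₁) * ((φ s z₂ - z₂) / s - (φ s z₁ - z₁) / s) =
        (z₂ - z₁) * ((φ s z₂ - φ s z₁) - (z₂ - z₁)) / s := by
      ring
    rw [hfinal]
    rw [div_le_iff₀ h0]
    calc (z₂ - z₁) * ((φ s z₂ - φ s z₁) - (z₂ - z₁)) ≤ (Lf * exp Lf * s) * (z₂ - z₁)^2 := key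
      _ ≤ (Lf * exp Lf + 1) * (z₂ - z₁)^2 * s := by nlinarith [sq_nonneg (z₂ - z₁), exp_pos Lf, mul_nonneg hLf (exp_pos Lf).le, hs.2]
end

section
/- Suppose f : ℝ → ℝ is continuous, one-sided Lipschitz and locally Lipschitz with polynomial growth of the local Lipschitz constant, let φ be its flow, and define ψ_s(z) = (φ_s(z) − z)/s for s > 0 and ψ_0 = f. Then there exist q' ∈ ℕ and a constant C ∈ (0,∞) such that for all s ∈ [0,1] and all z₁, z₂ ∈ ℝ one has |ψ_s(z₂) − ψ_s(z₁)| ≤ C (1 + |z₁|^{2q'} + |z₂|^{2q'}) |z₂ − z₁|. -/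
lemma le_init_aux {h h' : ℝ → ℝ}
    (H : ∀ t ∈ Set.Icc (0:ℝ) 1, HasDerivWithinAt h (h' t) (Set.Icc 0 1) t)
    (H0 : ∀ t ∈ Set.Ioo (0:ℝ) 1, h' t ≤ 0) :
    ∀ t ∈ Set.Icc (0:ℝ) 1, h t ≤ h 0 := by
  have cont : ContinuousOn h (Set.Icc 0 1) := fun t ht => (H t ht).continuousWithinAt
  have anti : AntitoneOn h (Set.Icc 0 1) := by
    apply antitoneOn_of_deriv_nonpos (convex_Icc 0 1) cont
    · intro x hx
      rw [interior_Icc] at hx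
      exact (((H x ⟨hx.1.le, hx.2.le⟩).hasDerivAt
        (Icc_mem_nhds hx.1 hx.2)).differentiableAt).differentiableWithinAt
    · intro x hx
      rw [interior_Icc] at hx
      rw [((H x ⟨hx.1.le, hx.2.le⟩).hasDerivAt (Icc_mem_nhds hx.1 hx.2)).deriv]
      exact H0 x hx
  exact fun t ht => anti (Set.left_mem_Icc.2 one_pos.le) ht ht.1

lemma pow_add_one_le_aux (q : ℕ) (x : ℝ) (hx : 0 ≤ x) : (1+x)^q ≤ 2^q * (1+x^q) := by
  calc (1+x)^q ≤ (2 * max 1 x)^q := by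
        apply pow_le_pow_left₀ (by positivity)
        rcases le_total 1 x with h | h
        · rw [max_eq_right h]; linarith
        · rw [max_eq_left h]; linarith
    _ = 2^q * (max 1 x)^q := mul_pow _ _ _
    _ ≤ 2^q * (1 + x^q) := by
        have h1 : (max 1 x)^q ≤ 1 + x^q := by
          rcases le_total 1 x with h | h
          · rw [max_eq_right h]; nlinarith [pow_nonneg hx q]
          · rw [max_eq_left h, one_pow]; nlinarith [pow_nonneg hx q]
        have h2 : (0:ℝ) ≤ 2^q := by positivity
        nlinarith

/-- If `f : ℝ → ℝ` is continuous, one-sided Lipschitz and locally Lipschitz with polynomial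
growth of the local Lipschitz constant, `φ` is its flow and `ψ s z = (φ s z - z)/s` for
`s > 0`, `ψ 0 = f`, then there exist `q' ∈ ℕ` and `C ∈ (0,∞)` such that for all `s ∈ [0,1]`
and all `z₁, z₂ : ℝ`, `|ψ s z₂ - ψ s z₁| ≤ C * (1 + |z₁|^(2q') + |z₂|^(2q')) * |z₂ - z₁|`. -/
theorem stmt2
    (f : ℝ → ℝ) (hf : Continuous f)
    (Lf : ℝ) (hLf : 0 ≤ Lf)
    (hosl : ∀ z₁ z₂ : ℝ, (z₂ - z₁) * (f z₂ - f z₁) ≤ Lf * (z₂ - z₁) ^ 2)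
    (q : ℕ)
    (hloc : ∀ z₁ z₂ : ℝ,
      |f z₂ - f z₁| ≤ Lf * (1 + |z₁| ^ (2 * q) + |z₂| ^ (2 * q)) * |z₂ - z₁|)
    (φ : ℝ → ℝ → ℝ)
    (hφ0 : ∀ z : ℝ, φ 0 z = z)
    (hφ' : ∀ z : ℝ, ∀ s : ℝ, 0 ≤ s →
      HasDerivWithinAt (fun u => φ u z) (f (φ s z)) (Set.Ici 0) s)
    (ψ : ℝ → ℝ → ℝ)
    (hψ0 : ∀ z : ℝ, ψ 0 z = f z)
    (hψ : ∀ s : ℝ, 0 < s → ∀ z : ℝ, ψ s z = (φ s z - z) / s) :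
    ∃ q' : ℕ, ∃ C : ℝ, 0 < C ∧ ∀ s ∈ Set.Icc (0:ℝ) 1, ∀ z₁ z₂ : ℝ,
      |ψ s z₂ - ψ s z₁| ≤ C * (1 + |z₁| ^ (2 * q') + |z₂| ^ (2 * q')) * |z₂ - z₁| := by
  have hd : ∀ z : ℝ, ∀ t ∈ Set.Icc (0:ℝ) 1,
      HasDerivWithinAt (fun u => φ u z) (f (φ t z)) (Set.Icc 0 1) t :=
    fun z t ht => (hφ' z t ht.1).mono Set.Icc_subset_Ici_self
  -- Step 1: polynomial bound on the flow
  have flowA : ∀ z : ℝ, ∀ t ∈ Set.Icc (0:ℝ) 1,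
      (φ t z)^2 ≤ Real.exp (2*Lf+1) * (1 + (f 0)^2) * (1 + z^2) := by
    intro z t ht
    set K : ℝ := 2*Lf+1 with hK
    set c : ℝ := (f 0)^2 with hc
    have key := le_init_aux (h := fun u => ((φ u z)^2 + c) * Real.exp (-K*u))
      (h' := fun u => (2*(φ u z)*(f (φ u z))) * Real.exp (-K*u)
           + ((φ u z)^2 + c) * (-K * Real.exp (-K*u)))
      (by
        intro u hu
        have hsq : HasDerivWithinAt (fun v => (φ v z)^2 + c)
            (2*(φ u z)*(f (φ u z))) (Set.Icc 0 1) u := by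
          have := ((hd z u hu).pow 2).add_const c
          refine this.congr_deriv ?_
          push_cast
          ring
        have hexp : HasDerivAt (fun v : ℝ => Real.exp (-K*v)) (-K * Real.exp (-K*u)) u := by
          have h := ((hasDerivAt_id u).const_mul (-K)).exp
          simpa [mul_comm] using h
        exact hsq.mul hexp.hasDerivWithinAt)
      (by
        intro u hu
        have key2 : 2*(φ u z)*(f (φ u z)) ≤ K*((φ u z)^2 + c) := by
          have h1 := hosl 0 (φ u z)
          simp only [sub_zero] at h1
          nlinarith [sq_nonneg (φ u z - f 0), sq_nonneg (φ u z)]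
        have hE : (0:ℝ) ≤ Real.exp (-K*u) := (Real.exp_pos _).le
        show (2*(φ u z)*(f (φ u z))) * Real.exp (-K*u)
           + ((φ u z)^2 + c) * (-K * Real.exp (-K*u)) ≤ 0
        nlinarith [mul_le_mul_of_nonneg_right key2 hE])
      t ht
    simp only [hφ0 z, mul_zero, neg_zero, Real.exp_zero, mul_one] at key
    have h3 := mul_le_mul_of_nonneg_right key (Real.exp_pos (K*t)).le
    have e : Real.exp (-K*t) * Real.exp (K*t) = 1 := by
      rw [← Real.exp_add]; ring_nf; exact Real.exp_zero
    have h1 : (φ t z)^2 + c ≤ (z^2+c) * Real.exp (K*t) := by nlinarith [h3, e]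
    have hle : Real.exp (K*t) ≤ Real.exp K := by
      apply Real.exp_le_exp.2
      nlinarith [ht.1, ht.2, hLf]
    have hcn : (0:ℝ) ≤ c := sq_nonneg _
    have hEK : (0:ℝ) < Real.exp K := Real.exp_pos _
    nlinarith [sq_nonneg z, mul_le_mul_of_nonneg_left hle (by positivity : (0:ℝ) ≤ z^2 + c),
      mul_nonneg (mul_nonneg hEK.le hcn) (sq_nonneg z)]
  -- Step 2: one-sided Lipschitz contraction of the flow
  have contract : ∀ z₁ z₂ : ℝ, ∀ t ∈ Set.Icc (0:ℝ) 1,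
      |φ t z₂ - φ t z₁| ≤ Real.exp Lf * |z₂ - z₁| := by
    intro z₁ z₂ t ht
    have key := le_init_aux (h := fun u => (φ u z₂ - φ u z₁)^2 * Real.exp (-(2*Lf)*u))
      (h' := fun u => (2*(φ u z₂ - φ u z₁)*(f (φ u z₂) - f (φ u z₁))) * Real.exp (-(2*Lf)*u)
           + (φ u z₂ - φ u z₁)^2 * (-(2*Lf) * Real.exp (-(2*Lf)*u)))
      (by
        intro u hu
        have hsq : HasDerivWithinAt (fun v => (φ v z₂ - φ v z₁)^2)
            (2*(φ u z₂ - φ u z₁)*(f (φ u z₂) - f (φ u z₁))) (Set.Icc 0 1) u := by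
          have := ((hd z₂ u hu).sub (hd z₁ u hu)).pow 2
          refine this.congr_deriv ?_
          push_cast [Pi.sub_apply]
          ring
        have hexp : HasDerivAt (fun v : ℝ => Real.exp (-(2*Lf)*v))
            (-(2*Lf) * Real.exp (-(2*Lf)*u)) u := by
          have h := ((hasDerivAt_id u).const_mul (-(2*Lf))).exp
          simpa [mul_comm] using h
        exact hsq.mul hexp.hasDerivWithinAt)
      (by
        intro u hu
        have key2 := hosl (φ u z₁) (φ u z₂)
        have hE : (0:ℝ) ≤ Real.exp (-(2*Lf)*u) := (Real.exp_pos _).le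
        show (2*(φ u z₂ - φ u z₁)*(f (φ u z₂) - f (φ u z₁))) * Real.exp (-(2*Lf)*u)
           + (φ u z₂ - φ u z₁)^2 * (-(2*Lf) * Real.exp (-(2*Lf)*u)) ≤ 0
        nlinarith [mul_le_mul_of_nonneg_right key2 hE])
      t ht
    simp only [hφ0, mul_zero, neg_zero, Real.exp_zero, mul_one] at key
    have h3 := mul_le_mul_of_nonneg_right key (Real.exp_pos ((2*Lf)*t)).le
    have e : Real.exp (-(2*Lf)*t) * Real.exp ((2*Lf)*t) = 1 := by
      rw [← Real.exp_add]; ring_nf; exact Real.exp_zero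
    have h1 : (φ t z₂ - φ t z₁)^2 ≤ (z₂-z₁)^2 * Real.exp ((2*Lf)*t) := by nlinarith [h3, e]
    have hle : Real.exp ((2*Lf)*t) ≤ Real.exp (2*Lf) :=
      Real.exp_le_exp.2 (by nlinarith [ht.1, ht.2])
    have h2 : (φ t z₂ - φ t z₁)^2 ≤ (Real.exp Lf * |z₂ - z₁|)^2 := by
      have hEq : (Real.exp Lf * |z₂ - z₁|)^2 = (z₂-z₁)^2 * Real.exp (2*Lf) := by
        rw [mul_pow, sq_abs, ← Real.exp_nat_mul]
        ring_nf
      rw [hEq]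
      nlinarith [mul_le_mul_of_nonneg_left hle (sq_nonneg (z₂ - z₁))]
    calc |φ t z₂ - φ t z₁| = Real.sqrt ((φ t z₂ - φ t z₁)^2) := (Real.sqrt_sq_eq_abs _).symm
      _ ≤ Real.sqrt ((Real.exp Lf * |z₂ - z₁|)^2) := Real.sqrt_le_sqrt h2
      _ = Real.exp Lf * |z₂ - z₁| := Real.sqrt_sq (by positivity)
  -- Step 3: polynomial bound for powers of the flow
  obtain ⟨M, hM, hMeq⟩ : ∃ M : ℝ, 0 < M ∧ M = Real.exp (2*Lf+1) * (1 + (f 0)^2) :=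
    ⟨_, by positivity, rfl⟩
  rw [← hMeq] at flowA
  obtain ⟨B, hB, hBeq⟩ : ∃ B : ℝ, 0 ≤ B ∧ B = (2*M)^q := ⟨_, by positivity, rfl⟩
  have powB : ∀ z : ℝ, ∀ t ∈ Set.Icc (0:ℝ) 1, |φ t z|^(2*q) ≤ B*(1+|z|^(2*q)) := by
    intro z t ht
    have h4 : (z^2)^q = |z|^(2*q) := by rw [pow_mul, sq_abs]
    calc |φ t z|^(2*q) = ((φ t z)^2)^q := by rw [pow_mul, sq_abs]
      _ ≤ (M*(1+z^2))^q := pow_le_pow_left₀ (sq_nonneg _) (flowA z t ht) q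
      _ = M^q*(1+z^2)^q := mul_pow _ _ _
      _ ≤ M^q*(2^q*(1+(z^2)^q)) :=
          mul_le_mul_of_nonneg_left (pow_add_one_le_aux q (z^2) (sq_nonneg z)) (by positivity)
      _ = B*(1+|z|^(2*q)) := by rw [h4, hBeq, mul_pow]; ring
  -- Step 4: uniform local Lipschitz bound for the vector field along the flow
  obtain ⟨C0, hC0, hC0eq⟩ : ∃ C0 : ℝ, 0 ≤ C0 ∧ C0 = Lf * Real.exp Lf * (1+2*B) :=
    ⟨_, mul_nonneg (mul_nonneg hLf (Real.exp_pos Lf).le) (by positivity), rfl⟩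
  have main : ∀ z₁ z₂ : ℝ, ∀ u ∈ Set.Icc (0:ℝ) 1,
      |f (φ u z₂) - f (φ u z₁)| ≤ C0 * (1+|z₁|^(2*q)+|z₂|^(2*q)) * |z₂-z₁| := by
    intro z₁ z₂ u hu
    have b1 := powB z₁ u hu
    have b2 := powB z₂ u hu
    have ha : (0:ℝ) ≤ |z₁|^(2*q) := by positivity
    have hb : (0:ℝ) ≤ |z₂|^(2*q) := by positivity
    calc |f (φ u z₂) - f (φ u z₁)|
        ≤ Lf * (1 + |φ u z₁|^(2*q) + |φ u z₂|^(2*q)) * |φ u z₂ - φ u z₁| :=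
          hloc (φ u z₁) (φ u z₂)
      _ ≤ Lf * (1 + B*(1+|z₁|^(2*q)) + B*(1+|z₂|^(2*q))) * (Real.exp Lf * |z₂-z₁|) := by
          apply mul_le_mul
          · apply mul_le_mul_of_nonneg_left _ hLf
            linarith
          · exact contract z₁ z₂ u hu
          · exact abs_nonneg _
          · have : (0:ℝ) ≤ 1 + B*(1+|z₁|^(2*q)) + B*(1+|z₂|^(2*q)) := by nlinarith
            exact mul_nonneg hLf this
      _ ≤ C0 * (1+|z₁|^(2*q)+|z₂|^(2*q)) * |z₂-z₁| := by
          have inner : 1 + B*(1+|z₁|^(2*q)) + B*(1+|z₂|^(2*q))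
              ≤ (1+2*B)*(1+|z₁|^(2*q)+|z₂|^(2*q)) := by nlinarith
          have key : Lf * (1 + B*(1+|z₁|^(2*q)) + B*(1+|z₂|^(2*q))) * Real.exp Lf
              ≤ C0 * (1+|z₁|^(2*q)+|z₂|^(2*q)) := by
            calc Lf * (1 + B*(1+|z₁|^(2*q)) + B*(1+|z₂|^(2*q))) * Real.exp Lf
                = (Lf*Real.exp Lf) * (1 + B*(1+|z₁|^(2*q)) + B*(1+|z₂|^(2*q))) := by ring
              _ ≤ (Lf*Real.exp Lf) * ((1+2*B)*(1+|z₁|^(2*q)+|z₂|^(2*q))) :=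
                  mul_le_mul_of_nonneg_left inner (mul_nonneg hLf (Real.exp_pos Lf).le)
              _ = C0 * (1+|z₁|^(2*q)+|z₂|^(2*q)) := by rw [hC0eq]; ring
          have := mul_le_mul_of_nonneg_right key (abs_nonneg (z₂ - z₁))
          nlinarith [this]
  have hLfC : Lf ≤ C0 + 1 := by
    have e1 : 1 ≤ Real.exp Lf * (1+2*B) := by
      nlinarith [Real.one_le_exp hLf, hB, Real.exp_pos Lf]
    rw [hC0eq]
    nlinarith [mul_le_mul_of_nonneg_left e1 hLf]
  refine ⟨q, C0 + 1, by linarith, ?_⟩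
  intro s hs z₁ z₂
  have ha : (0:ℝ) ≤ |z₁|^(2*q) := by positivity
  have hb : (0:ℝ) ≤ |z₂|^(2*q) := by positivity
  have hFn : (0:ℝ) ≤ 1+|z₁|^(2*q)+|z₂|^(2*q) := by linarith
  rcases eq_or_lt_of_le hs.1 with h0 | hpos
  · -- s = 0
    rw [← h0, hψ0, hψ0]
    have h1 := hloc z₁ z₂
    have h2 := mul_le_mul_of_nonneg_right
      (mul_le_mul_of_nonneg_right hLfC hFn) (abs_nonneg (z₂ - z₁))
    nlinarith [h1, h2]
  · -- s > 0
    rw [hψ s hpos z₁, hψ s hpos z₂]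
    have hds : ∀ x ∈ Set.Icc (0:ℝ) 1, HasDerivWithinAt (fun u => φ u z₂ - φ u z₁)
        (f (φ x z₂) - f (φ x z₁)) (Set.Icc 0 1) x :=
      fun x hx => (hd z₂ x hx).sub (hd z₁ x hx)
    have G := Convex.norm_image_sub_le_of_norm_hasDerivWithin_le hds
      (fun x hx => by rw [Real.norm_eq_abs]; exact main z₁ z₂ x hx)
      (convex_Icc 0 1) (Set.left_mem_Icc.2 one_pos.le) hs
    simp only [Real.norm_eq_abs, hφ0, sub_zero] at G
    rw [abs_of_nonneg hs.1] at G
    have heq : (φ s z₂ - z₂)/s - (φ s z₁ - z₁)/s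
        = ((φ s z₂ - φ s z₁) - (z₂ - z₁))/s := by ring
    rw [heq, abs_div, abs_of_pos hpos, div_le_iff₀ hpos]
    calc |(φ s z₂ - φ s z₁) - (z₂ - z₁)|
        ≤ C0 * (1+|z₁|^(2*q)+|z₂|^(2*q)) * |z₂-z₁| * s := G
      _ ≤ (C0+1) * (1+|z₁|^(2*q)+|z₂|^(2*q)) * |z₂-z₁| * s := by
          have h2 := mul_le_mul_of_nonneg_right
            (mul_le_mul_of_nonneg_right
              (mul_le_mul_of_nonneg_right (by linarith : C0 ≤ C0+1) hFn)
              (abs_nonneg (z₂ - z₁))) hpos.le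
          exact h2
end

section
/- Suppose f : ℝ → ℝ is continuous, one-sided Lipschitz and locally Lipschitz with polynomial growth of the local Lipschitz constant, let φ be its flow, and define ψ_s(z) = (φ_s(z) − z)/s for s > 0 and ψ_0 = f. Then there exist q' ∈ ℕ and a constant C ∈ (0,∞) such that for all s ∈ [0,1] and all z ∈ ℝ one has |ψ_s(z) − f(z)| ≤ C s (1 + |z|^{2q'+1}). -/
open Set Real

private lemma aux_pow_le_one_add {x : ℝ} (hx : 0 ≤ x) {m n : ℕ} (h : m ≤ n) :
    x ^ m ≤ 1 + x ^ n := by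
  rcases le_total x 1 with hx1 | hx1
  · have : x ^ m ≤ 1 := pow_le_one₀ hx hx1
    nlinarith [pow_nonneg hx n]
  · have : x ^ m ≤ x ^ n := pow_le_pow_right₀ hx1 h
    nlinarith

private lemma aux_one_add_abs_pow (z : ℝ) (n : ℕ) :
    (1 + |z|) ^ n ≤ 2 ^ n * (1 + |z| ^ n) := by
  rcases le_total (|z|) 1 with h | h
  · have h1 : (1 + |z|) ^ n ≤ 2 ^ n := by
      apply pow_le_pow_left₀ (by positivity) (by linarith)
    nlinarith [pow_nonneg (abs_nonneg z) n, pow_nonneg (by norm_num : (0:ℝ) ≤ 2) n]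
  · have h1 : (1 + |z|) ^ n ≤ (2 * |z|) ^ n := by
      apply pow_le_pow_left₀ (by positivity) (by linarith)
    have h2 : (2 * |z|) ^ n = 2 ^ n * |z| ^ n := mul_pow 2 _ n
    nlinarith [pow_nonneg (by norm_num : (0:ℝ) ≤ 2) n, pow_nonneg (abs_nonneg z) n]

set_option maxHeartbeats 1000000 in
/-- If `f : ℝ → ℝ` is continuous, one-sided Lipschitz and locally Lipschitz with polynomial
growth of the local Lipschitz constant, `φ` is its flow and `ψ s z = (φ s z - z)/s` for
`s > 0`, `ψ 0 = f`, then there exist `q' ∈ ℕ` and `C ∈ (0,∞)` such that for all `s ∈ [0,1]`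
and all `z ∈ ℝ`, `|ψ s z - f z| ≤ C * s * (1 + |z|^(2q'+1))`. -/
theorem stmt3
    (f : ℝ → ℝ) (hf : Continuous f)
    (Lf : ℝ) (hLf : 0 ≤ Lf)
    (hosl : ∀ z₁ z₂ : ℝ, (z₂ - z₁) * (f z₂ - f z₁) ≤ Lf * (z₂ - z₁) ^ 2)
    (q : ℕ)
    (hloc : ∀ z₁ z₂ : ℝ,
      |f z₂ - f z₁| ≤ Lf * (1 + |z₁| ^ (2 * q) + |z₂| ^ (2 * q)) * |z₂ - z₁|)
    (φ : ℝ → ℝ → ℝ)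
    (hφ0 : ∀ z : ℝ, φ 0 z = z)
    (hφ' : ∀ z : ℝ, ∀ s : ℝ, 0 ≤ s →
      HasDerivWithinAt (fun u => φ u z) (f (φ s z)) (Set.Ici 0) s)
    (ψ : ℝ → ℝ → ℝ)
    (hψ0 : ∀ z : ℝ, ψ 0 z = f z)
    (hψ : ∀ s : ℝ, 0 < s → ∀ z : ℝ, ψ s z = (φ s z - z) / s) :
    ∃ q' : ℕ, ∃ C : ℝ, 0 < C ∧ ∀ s ∈ Set.Icc (0:ℝ) 1, ∀ z : ℝ,
      |ψ s z - f z| ≤ C * s * (1 + |z| ^ (2 * q' + 1)) := by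
  set K : ℝ := 2 * Lf + 1 with hK
  have hK1 : (1:ℝ) ≤ K := by linarith
  set E : ℝ := Real.exp K with hEdef
  have hE1 : (1:ℝ) ≤ E := by
    rw [hEdef]; nlinarith [Real.add_one_le_exp K]
  set cF : ℝ := |f 0| + 3 * Lf + 1 with hcF
  have hcFpos : 0 < cF := by positivity
  set cA : ℝ := cF * E with hcA
  have hcApos : 0 < cA := by positivity
  set cM : ℝ := 2 + (1 + cA) ^ (2 * q) with hcM
  have hcMpos : 0 < cM := by positivity
  set cB : ℝ := cF + Lf * cM * cA with hcB
  have hcBpos : 0 < cB := by positivity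
  set cC : ℝ := Lf * cM * cB with hcC
  have hcCnn : 0 ≤ cC := by positivity
  set N₁ : ℕ := 2 * q * (2 * q + 1) with hN₁
  set N₂ : ℕ := N₁ + 2 * q + 1 with hN₂
  set N₃ : ℕ := N₁ + N₂ with hN₃
  refine ⟨N₃, cC * 2 ^ (N₃ + 1) + 1, by positivity, ?_⟩
  intro s hs z
  set X : ℝ := 1 + |z| with hXdef
  have hX1 : (1:ℝ) ≤ X := by have := abs_nonneg z; rw [hXdef]; linarith
  have hX0 : (0:ℝ) ≤ X := by linarith
  have habsX : |z| ≤ X := by rw [hXdef]; linarith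
  -- bound on |f z|
  have hFb : |f z| ≤ cF * X ^ (2 * q + 1) := by
    have h0 := hloc 0 z
    have h00 : |(0:ℝ)| ^ (2 * q) ≤ 1 :=
      pow_le_one₀ (abs_nonneg _) (by norm_num)
    have hz2q : |z| ^ (2 * q) ≤ X ^ (2 * q) :=
      pow_le_pow_left₀ (abs_nonneg z) habsX _
    have h1X : (1:ℝ) ≤ X ^ (2 * q) := one_le_pow₀ hX1
    have hfz : |f z| ≤ |f 0| + Lf * (1 + |(0:ℝ)| ^ (2*q) + |z| ^ (2*q)) * |z - 0| := by
      calc |f z| ≤ |f 0| + |f z - f 0| := by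
            have := abs_add_le (f 0) (f z - f 0); simpa using this
        _ ≤ _ := by linarith [h0]
    rw [sub_zero] at hfz
    have hnn : 0 ≤ |z| := abs_nonneg z
    have e1 : 1 + |(0:ℝ)|^(2*q) + |z|^(2*q) ≤ 3 * X^(2*q) := by linarith
    have e2 : Lf * (1 + |(0:ℝ)|^(2*q) + |z|^(2*q)) * |z|
        ≤ Lf * (3 * X^(2*q)) * X := by
      apply mul_le_mul (mul_le_mul_of_nonneg_left e1 hLf) habsX hnn
      positivity
    have e2' : Lf * (3 * X^(2*q)) * X = 3 * Lf * X^(2*q+1) := by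
      rw [pow_succ]; ring
    have e3 : (1:ℝ) ≤ X^(2*q+1) := one_le_pow₀ hX1
    have e4 : |f 0| * 1 ≤ |f 0| * X^(2*q+1) :=
      mul_le_mul_of_nonneg_left e3 (abs_nonneg (f 0))
    rw [hcF]
    nlinarith [mul_nonneg hLf (pow_nonneg hX0 (2*q+1))]
  -- continuity of the flow in time
  have hcont : ContinuousOn (fun u => φ u z) (Icc (0:ℝ) 1) := fun u hu =>
    ((hφ' z u hu.1).continuousWithinAt).mono (Icc_subset_Ici_self)
  -- Step 1: Gronwall bound |φ s z - z| ≤ |f z| * E on [0,1]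
  have hA : ∀ u ∈ Icc (0:ℝ) 1, |φ u z - z| ≤ |f z| * E := by
    have hKne : K ≠ 0 := by linarith
    set v : ℝ → ℝ := fun u => (φ u z - z) ^ 2 with hv
    have hvc : ContinuousOn v (Icc (0:ℝ) 1) :=
      ((hcont.sub continuousOn_const).pow 2)
    have hvd : ∀ x ∈ Ico (0:ℝ) 1,
        HasDerivWithinAt v ((2:ℝ) * (φ x z - z) ^ 1 * f (φ x z)) (Ici x) x := by
      intro x hx
      have h1 : HasDerivWithinAt (fun u => φ u z - z) (f (φ x z)) (Ici 0) x :=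
        (hφ' z x hx.1).sub_const z
      have h2 := h1.pow (n := 2)
      norm_num at h2 ⊢
      exact h2.mono (Ici_subset_Ici.2 hx.1)
    have hbound : ∀ x ∈ Ico (0:ℝ) 1,
        (2:ℝ) * (φ x z - z) ^ 1 * f (φ x z) ≤ K * v x + (f z) ^ 2 := by
      intro x hx
      have h1 := hosl z (φ x z)
      have hgfz : 2 * (φ x z - z) * f z ≤ (φ x z - z)^2 + (f z)^2 := by
        nlinarith [sq_nonneg (φ x z - z - f z)]
      have hre : (2:ℝ) * (φ x z - z)^1 * f (φ x z)
          = 2 * ((φ x z - z) * (f (φ x z) - f z)) + 2 * (φ x z - z) * f z := by ring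
      rw [hre]
      simp only [hv, hK]
      nlinarith [h1]
    have hg := le_gronwallBound_of_liminf_deriv_right_le (δ := 0) (K := K)
      (ε := (f z) ^ 2) hvc
      (fun x hx r hr => (hvd x hx).liminf_right_slope_le hr)
      (by simp [hv, hφ0]) hbound
    intro u hu
    have hvu := hg u hu
    rw [gronwallBound_of_K_ne_0 hKne] at hvu
    have hKpos : (0:ℝ) < K := by linarith
    have hKu : K * (u - 0) ≤ K := by
      have h1 : u - 0 ≤ 1 := by simpa using hu.2
      nlinarith
    have hexp : Real.exp (K * (u - 0)) ≤ E := by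
      rw [hEdef]; exact Real.exp_le_exp.2 hKu
    have hexp0 : (0:ℝ) < Real.exp (K * (u - 0)) := Real.exp_pos _
    have hvE : v u ≤ (f z) ^ 2 * E := by
      have hKinv : (f z)^2 / K ≤ (f z)^2 := by
        rw [div_le_iff₀ hKpos]
        nlinarith [sq_nonneg (f z)]
      have hd : 0 ≤ (f z)^2 / K := by positivity
      have h1 : (f z)^2 / K * (Real.exp (K * (u-0)) - 1) ≤ (f z)^2 * E :=
        calc (f z)^2 / K * (Real.exp (K * (u-0)) - 1)
            ≤ (f z)^2 / K * E := by
              apply mul_le_mul_of_nonneg_left _ hd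
              linarith
          _ ≤ (f z)^2 * E := mul_le_mul_of_nonneg_right hKinv (by linarith)
      calc v u ≤ 0 * Real.exp (K * (u-0)) + (f z)^2 / K * (Real.exp (K*(u-0)) - 1) := hvu
        _ = (f z)^2 / K * (Real.exp (K*(u-0)) - 1) := by ring
        _ ≤ (f z)^2 * E := h1
    have hsq : (φ u z - z) ^ 2 ≤ (|f z| * E) ^ 2 := by
      have h2 : (f z)^2 * E ≤ (|f z| * E)^2 := by
        have h3 : (|f z| * E)^2 = (f z)^2 * E * E := by
          rw [mul_pow, sq_abs]; ring
        nlinarith [sq_nonneg (f z)]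
      exact le_trans hvE h2
    calc |φ u z - z| = Real.sqrt ((φ u z - z)^2) := (Real.sqrt_sq_eq_abs _).symm
      _ ≤ Real.sqrt ((|f z| * E)^2) := Real.sqrt_le_sqrt hsq
      _ = |f z| * E := Real.sqrt_sq (by positivity)
  -- |φ u z| is bounded
  have hφbd : ∀ u ∈ Icc (0:ℝ) 1, |φ u z| ≤ (1 + cA) * X ^ (2 * q + 1) := by
    intro u hu
    have h1 := hA u hu
    have h2 : |φ u z| ≤ |z| + |φ u z - z| := by
      have := abs_add_le z (φ u z - z); simpa using this
    have h3 : |f z| * E ≤ cA * X ^ (2*q+1) := by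
      rw [hcA]
      calc |f z| * E ≤ cF * X ^ (2*q+1) * E :=
            mul_le_mul_of_nonneg_right hFb (by linarith)
        _ = cF * E * X ^ (2*q+1) := by ring
    have h4 : |z| ≤ X ^ (2*q+1) := le_trans habsX (le_self_pow₀ hX1 (by omega))
    nlinarith [pow_nonneg hX0 (2*q+1)]
  -- the "Lipschitz factor" bound
  have hMb : ∀ u ∈ Icc (0:ℝ) 1,
      1 + |z| ^ (2*q) + |φ u z| ^ (2*q) ≤ cM * X ^ N₁ := by
    intro u hu
    have h1 : (1:ℝ) ≤ X ^ N₁ := one_le_pow₀ hX1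
    have h2 : |z| ^ (2*q) ≤ X ^ N₁ :=
      le_trans (pow_le_pow_left₀ (abs_nonneg z) habsX _)
        (pow_le_pow_right₀ hX1 (by rw [hN₁]; nlinarith [Nat.zero_le q]))
    have h3 : |φ u z| ^ (2*q) ≤ ((1+cA) * X ^ (2*q+1)) ^ (2*q) :=
      pow_le_pow_left₀ (abs_nonneg _) (hφbd u hu) _
    have h4 : ((1+cA) * X ^ (2*q+1)) ^ (2*q) = (1+cA)^(2*q) * X ^ N₁ := by
      rw [mul_pow, ← pow_mul, hN₁]; ring_nf
    rw [h4] at h3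
    rw [hcM]
    nlinarith [pow_nonneg hX0 N₁]
  -- Step 2: |φ u z - z| ≤ cB * X^N₂ * u
  have hBd : ∀ u ∈ Icc (0:ℝ) 1, |φ u z - z| ≤ cB * X ^ N₂ * u := by
    intro u hu
    have key := Convex.norm_image_sub_le_of_norm_hasDerivWithin_le
      (f := fun u => φ u z) (f' := fun u => f (φ u z)) (s := Icc (0:ℝ) 1)
      (C := cB * X ^ N₂)
      (fun x hx => (hφ' z x hx.1).mono (Icc_subset_Ici_self))
      ?_ (convex_Icc 0 1) (left_mem_Icc.2 zero_le_one) hu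
    · simp only [hφ0, Real.norm_eq_abs, sub_zero] at key
      rwa [abs_of_nonneg hu.1] at key
    · intro x hx
      rw [Real.norm_eq_abs]
      have h1 := hloc z (φ x z)
      have h2 := hMb x hx
      have h3 := hA x hx
      have h4 : |f z| * E ≤ cA * X ^ (2*q+1) := by
        rw [hcA]
        calc |f z| * E ≤ cF * X ^ (2*q+1) * E :=
              mul_le_mul_of_nonneg_right hFb (by linarith)
          _ = cF * E * X ^ (2*q+1) := by ring
      have h5 : |φ x z - z| ≤ cA * X ^ (2*q+1) := le_trans h3 h4
      have h6 : |f (φ x z)| ≤ |f z| + |f (φ x z) - f z| := by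
        have := abs_add_le (f z) (f (φ x z) - f z); simpa using this
      have h7 : |f (φ x z) - f z| ≤ Lf * (cM * X ^ N₁) * (cA * X ^ (2*q+1)) := by
        calc |f (φ x z) - f z|
            ≤ Lf * (1 + |z|^(2*q) + |φ x z|^(2*q)) * |φ x z - z| := h1
          _ ≤ Lf * (cM * X ^ N₁) * (cA * X ^ (2*q+1)) := by
              apply mul_le_mul
              · exact mul_le_mul_of_nonneg_left h2 hLf
              · exact h5
              · exact abs_nonneg _
              · positivity
    -- combine
      have h8 : Lf * (cM * X ^ N₁) * (cA * X ^ (2*q+1))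
          = Lf * cM * cA * X ^ N₂ := by
        rw [hN₂, pow_add, pow_add]; ring
      have h9 : |f z| ≤ cF * X ^ N₂ := by
        refine le_trans hFb ?_
        apply mul_le_mul_of_nonneg_left _ (le_of_lt hcFpos)
        exact pow_le_pow_right₀ hX1 (by omega)
      rw [hcB]
      have := h6.trans (by linarith [h7, h8] : |f z| + |f (φ x z) - f z|
         ≤ cF * X ^ N₂ + Lf * cM * cA * X ^ N₂)
      linarith [this]
  -- Step 3: |φ s z - z - s * f z| ≤ cC * X^N₃ * s^2
  have hs0 : (0:ℝ) ≤ s := hs.1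
  have hs1 : s ≤ 1 := hs.2
  have hStep3 : |φ s z - z - s * f z| ≤ cC * X ^ N₃ * s ^ 2 := by
    have key := Convex.norm_image_sub_le_of_norm_hasDerivWithin_le
      (f := fun u => φ u z - u * f z) (f' := fun u => f (φ u z) - f z)
      (s := Icc (0:ℝ) s) (C := cC * X ^ N₃ * s)
      ?_ ?_ (convex_Icc 0 s) (left_mem_Icc.2 hs0) (right_mem_Icc.2 hs0)
    · simp only [hφ0, Real.norm_eq_abs, sub_zero, zero_mul] at key
      rw [abs_of_nonneg hs0] at key
      calc |φ s z - z - s * f z| = |φ s z - s * f z - z| := by ring_nf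
        _ ≤ cC * X ^ N₃ * s * s := key
        _ = cC * X ^ N₃ * s ^ 2 := by ring
    · intro x hx
      have hx1 : x ∈ Icc (0:ℝ) 1 := ⟨hx.1, le_trans hx.2 hs1⟩
      have h1 : HasDerivWithinAt (fun u => φ u z) (f (φ x z)) (Icc 0 s) x :=
        (hφ' z x hx.1).mono (Icc_subset_Ici_self)
      have h2 : HasDerivWithinAt (fun u : ℝ => u * f z) (f z) (Icc 0 s) x :=
        (hasDerivAt_mul_const (f z)).hasDerivWithinAt
      exact h1.sub h2
    · intro x hx
      have hx1 : x ∈ Icc (0:ℝ) 1 := ⟨hx.1, le_trans hx.2 hs1⟩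
      rw [Real.norm_eq_abs]
      have h1 := hloc z (φ x z)
      have h2 := hMb x hx1
      have h3 := hBd x hx1
      have h4 : |f (φ x z) - f z|
          ≤ Lf * (cM * X ^ N₁) * (cB * X ^ N₂ * x) := by
        calc |f (φ x z) - f z|
            ≤ Lf * (1 + |z|^(2*q) + |φ x z|^(2*q)) * |φ x z - z| := h1
          _ ≤ Lf * (cM * X ^ N₁) * (cB * X ^ N₂ * x) := by
              apply mul_le_mul
              · exact mul_le_mul_of_nonneg_left h2 hLf
              · exact h3
              · exact abs_nonneg _
              · positivity
      have h5 : Lf * (cM * X ^ N₁) * (cB * X ^ N₂ * x)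
          ≤ cC * X ^ N₃ * s := by
        have hXN : X ^ N₁ * X ^ N₂ = X ^ N₃ := (pow_add X N₁ N₂).symm
        have hx2 : x ≤ s := hx.2
        calc Lf * (cM * X ^ N₁) * (cB * X ^ N₂ * x)
            = cC * (X ^ N₁ * X ^ N₂) * x := by rw [hcC]; ring
          _ = cC * X ^ N₃ * x := by rw [hXN]
          _ ≤ cC * X ^ N₃ * s := mul_le_mul_of_nonneg_left hx2 (by positivity)
      linarith
  -- conclusion
  rcases eq_or_lt_of_le hs0 with hseq | hspos
  · rw [← hseq, hψ0]
    simp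
  · rw [hψ s hspos z]
    have hnum : |(φ s z - z) / s - f z| = |φ s z - z - s * f z| / s := by
      have heq : (φ s z - z) / s - f z = (φ s z - z - s * f z) / s := by
        field_simp
      rw [heq, abs_div, abs_of_pos hspos]
    rw [hnum]
    have h1 : |φ s z - z - s * f z| / s ≤ cC * X ^ N₃ * s := by
      rw [div_le_iff₀ hspos]
      calc |φ s z - z - s * f z| ≤ cC * X ^ N₃ * s ^ 2 := hStep3
        _ = cC * X ^ N₃ * s * s := by ring
    have h2 : cC * X ^ N₃ ≤ (cC * 2 ^ (N₃ + 1) + 1) * (1 + |z| ^ (2 * N₃ + 1)) := by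
      have hp1 : X ^ N₃ ≤ 2 ^ N₃ * (1 + |z| ^ N₃) := aux_one_add_abs_pow z N₃
      have hp2 : |z| ^ N₃ ≤ 1 + |z| ^ (2 * N₃ + 1) :=
        aux_pow_le_one_add (abs_nonneg z) (by omega)
      have hp3 : (0:ℝ) ≤ |z| ^ (2 * N₃ + 1) := by positivity
      have hp4 : (0:ℝ) < 2 ^ N₃ := by positivity
      calc cC * X ^ N₃ ≤ cC * (2 ^ N₃ * (1 + |z| ^ N₃)) :=
            mul_le_mul_of_nonneg_left hp1 hcCnn
        _ ≤ cC * (2 ^ N₃ * (2 * (1 + |z| ^ (2*N₃+1)))) := by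
            apply mul_le_mul_of_nonneg_left _ hcCnn
            apply mul_le_mul_of_nonneg_left _ (le_of_lt hp4)
            linarith
        _ = cC * 2 ^ (N₃+1) * (1 + |z| ^ (2*N₃+1)) := by rw [pow_succ]; ring
        _ ≤ (cC * 2 ^ (N₃+1) + 1) * (1 + |z| ^ (2*N₃+1)) := by nlinarith
    calc |φ s z - z - s * f z| / s ≤ cC * X ^ N₃ * s := h1
      _ ≤ (cC * 2 ^ (N₃+1) + 1) * (1 + |z| ^ (2*N₃+1)) * s := by
          apply mul_le_mul_of_nonneg_right h2 hs0
      _ = (cC * 2 ^ (N₃+1) + 1) * s * (1 + |z| ^ (2*N₃+1)) := by ring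
end

section
/- Let H ∈ (1/2, 1) and let (β^H(t))_{t≥0} be a real-valued fractional Brownian motion with Hurst index H. Then there exists a constant C_H ∈ (0,∞) such that for every λ ∈ (0,∞) and every t ≥ 0, the fractional Ornstein–Uhlenbeck variable 𝒵^{H,λ}(t) = β^H(t) − λ∫₀^t e^{−λ(t−s)} β^H(s) ds satisfies E[|𝒵^{H,λ}(t)|²] ≤ C_H λ^{−2H}. -/
open MeasureTheory

/-- The fractional Ornstein–Uhlenbeck process driven by a fractional Brownian motion `β`
with Hurst index `lam ∈ (0,∞)`, defined pathwise via the integration-by-parts formula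
`𝒵^{H,λ}(t) = β(t) - λ ∫₀ᵗ exp(-λ(t-s)) β(s) ds`. -/
noncomputable def fracOU {Ω : Type*} (β : ℝ → Ω → ℝ) (lam t : ℝ) (ω : Ω) : ℝ :=
  β t ω - lam * ∫ s in (0:ℝ)..t, Real.exp (-(lam * (t - s))) * β s ω

/-- Cauchy–Schwarz inequality for integrals of real functions. -/
lemma cs_integral {α : Type*} [MeasurableSpace α] (ν : Measure α) {f g : α → ℝ}
    (hf : Integrable (fun x => f x ^ 2) ν) (hg : Integrable (fun x => g x ^ 2) ν)
    (hfg : Integrable (fun x => f x * g x) ν) :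
    (∫ x, f x * g x ∂ν) ^ 2 ≤ (∫ x, f x ^ 2 ∂ν) * (∫ x, g x ^ 2 ∂ν) := by
  have key : ∀ r : ℝ, 0 ≤ (∫ x, g x ^ 2 ∂ν) * (r * r) +
      (2 * ∫ x, f x * g x ∂ν) * r + (∫ x, f x ^ 2 ∂ν) := by
    intro r
    have h0 : (0:ℝ) ≤ ∫ x, (f x + r * g x) ^ 2 ∂ν := integral_nonneg fun x => sq_nonneg _
    have e1 : ∫ x, (f x + r * g x) ^ 2 ∂ν
        = ∫ x, (f x ^ 2 + 2 * r * (f x * g x)) + r ^ 2 * g x ^ 2 ∂ν := by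
      congr 1; funext x; ring
    have e2 : ∫ x, (f x ^ 2 + 2 * r * (f x * g x)) + r ^ 2 * g x ^ 2 ∂ν
        = ∫ x, f x ^ 2 + 2 * r * (f x * g x) ∂ν + ∫ x, r ^ 2 * g x ^ 2 ∂ν :=
      integral_add (hf.add (hfg.const_mul _)) (hg.const_mul _)
    have e3 : ∫ x, f x ^ 2 + 2 * r * (f x * g x) ∂ν
        = ∫ x, f x ^ 2 ∂ν + ∫ x, 2 * r * (f x * g x) ∂ν := integral_add hf (hfg.const_mul _)
    rw [e1, e2, e3, integral_const_mul, integral_const_mul] at h0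
    nlinarith [h0]
  have hd := discrim_le_zero key
  rw [discrim] at hd
  nlinarith [hd]

/-- The product of two functions in `L²` is integrable. -/
lemma l2_integrable_mul {Ω : Type*} [MeasurableSpace Ω] {μ : Measure Ω} {f g : Ω → ℝ}
    (hf : MemLp f 2 μ) (hg : MemLp g 2 μ) : Integrable (fun ω => f ω * g ω) μ := by
  have h : (1 : ENNReal) / 1 = 1 / 2 + 1 / 2 := by
    rw [ENNReal.div_add_div_same]
    norm_num
    rw [ENNReal.div_self] <;> norm_num
  have := (MemLp.smul (𝕜 := ℝ) (r := 1) hg hf : MemLp (f • g) 1 μ)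
  exact memLp_one_iff_integrable.mp this

/-- Moment bound for the fractional Ornstein–Uhlenbeck process, case `H ∈ (1/2,1)`:
there is `C_H ∈ (0,∞)` such that `E[|𝒵^{H,λ}(t)|²] ≤ C_H λ^{-2H}` for all `λ > 0`, `t ≥ 0`. -/
theorem stmt6
    {Ω : Type*} [MeasurableSpace Ω] (μ : Measure Ω) [IsProbabilityMeasure μ]
    (H : ℝ) (hH : H ∈ Set.Ioo (1/2 : ℝ) 1)
    (β : ℝ → Ω → ℝ)
    (hmeas : ∀ t : ℝ, AEStronglyMeasurable (β t) μ)
    (hpath : ∀ᵐ ω ∂μ, ContinuousOn (fun t => β t ω) (Set.Ici 0) ∧ β 0 ω = 0)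
    (hL2 : ∀ t : ℝ, 0 ≤ t → MemLp (β t) 2 μ)
    (hmean : ∀ t : ℝ, 0 ≤ t → ∫ ω, β t ω ∂μ = 0)
    (hcov : ∀ t s : ℝ, 0 ≤ t → 0 ≤ s →
      ∫ ω, β t ω * β s ω ∂μ = (t ^ (2*H) + s ^ (2*H) - |t - s| ^ (2*H)) / 2) :
    ∃ C : ℝ, 0 < C ∧ ∀ lam : ℝ, 0 < lam → ∀ t : ℝ, 0 ≤ t →
      ∫ ω, (fracOU β lam t ω) ^ 2 ∂μ ≤ C * lam ^ (-(2*H)) := by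
  classical
  obtain ⟨hH1, hH2⟩ := hH
  have hp0 : 0 < 2*H := by linarith
  have hp2 : 2*H ≤ 2 := by linarith
  -- ## Construction of a modification `b` of `β` with everywhere-continuous paths and
  -- ## genuinely strongly measurable time-marginals.
  set m : ℝ → Ω → ℝ := fun s => (hmeas s).mk _ with hm_def
  have hm : ∀ s : ℝ, β s =ᵐ[μ] m s := fun s => (hmeas s).ae_eq_mk
  have hnull : μ ({ω | ¬(ContinuousOn (fun t => β t ω) (Set.Ici 0) ∧ β 0 ω = 0)} ∪
      ⋃ q : ℚ, {ω | ¬ β (q:ℝ) ω = m (q:ℝ) ω}) = 0 := by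
    apply measure_union_null
    · rwa [← ae_iff]
    · exact measure_iUnion_null fun q => ae_iff.mp (hm (q:ℝ))
  obtain ⟨N, hNsub, hNm, hN0⟩ := exists_measurable_superset_of_null hnull
  set b : ℝ → Ω → ℝ := fun s ω => if ω ∈ N then 0 else β (max s 0) ω with hb_def
  have hgood : ∀ ω ∉ N, ContinuousOn (fun t => β t ω) (Set.Ici 0) ∧ β 0 ω = 0 := by
    intro ω hω
    by_contra hc
    exact hω (hNsub (Or.inl hc))
  have hratq : ∀ (q : ℚ), ∀ ω ∉ N, β (q:ℝ) ω = m (q:ℝ) ω := by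
    intro q ω hω
    by_contra hc
    exact hω (hNsub (Or.inr (Set.mem_iUnion.mpr ⟨q, hc⟩)))
  have hbcont : ∀ ω, Continuous fun s => b s ω := by
    intro ω
    by_cases hω : ω ∈ N
    · simp only [hb_def, if_pos hω]; exact continuous_const
    · simp only [hb_def, if_neg hω]
      exact (hgood ω hω).1.comp_continuous (continuous_id.max continuous_const)
        (fun x => Set.mem_Ici.mpr (le_max_right _ _))
  have hbSM : ∀ s : ℝ, StronglyMeasurable (b s) := by
    intro s
    have hseq : ∀ n : ℕ, ∃ q : ℚ, s < (q:ℝ) ∧ (q:ℝ) < s + 1/(n+1) :=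
      fun n => exists_rat_btwn (lt_add_of_pos_right s (by positivity))
    choose q hq1 hq2 using hseq
    have htend : Filter.Tendsto (fun n => ((q n : ℝ))) Filter.atTop (nhds s) := by
      have hub : Filter.Tendsto (fun n : ℕ => s + 1/(n+1 : ℝ)) Filter.atTop (nhds s) := by
        simpa using (tendsto_const_nhds (x := s)).add tendsto_one_div_add_atTop_nhds_zero_nat
      exact tendsto_of_tendsto_of_tendsto_of_le_of_le tendsto_const_nhds hub
        (fun n => (hq1 n).le) (fun n => (hq2 n).le)
    have hSMq : ∀ n : ℕ, StronglyMeasurable (b ((q n : ℝ))) := by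
      intro n
      have he : b ((q n : ℝ)) = fun ω => if ω ∈ N then 0 else m ((max (q n) 0 : ℚ) : ℝ) ω := by
        funext ω
        by_cases hω : ω ∈ N
        · simp only [hb_def, if_pos hω]
        · simp only [hb_def, if_neg hω]
          have hc : ((max (q n) 0 : ℚ) : ℝ) = max ((q n):ℝ) 0 := by push_cast; rfl
          rw [← hc]
          exact hratq _ ω hω
      rw [he]
      exact StronglyMeasurable.ite hNm stronglyMeasurable_const (hmeas _).stronglyMeasurable_mk
    apply stronglyMeasurable_of_tendsto Filter.atTop hSMq
    rw [tendsto_pi_nhds]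
    intro ω
    exact ((hbcont ω).tendsto s).comp htend
  have hbjoint : StronglyMeasurable (Function.uncurry b) :=
    stronglyMeasurable_uncurry_of_continuous_of_stronglyMeasurable hbcont hbSM
  have hbae : ∀ s : ℝ, 0 ≤ s → b s =ᵐ[μ] β s := by
    intro s hs
    apply ae_iff.mpr
    apply measure_mono_null _ hN0
    intro ω hω
    by_contra hc
    apply hω
    simp only [hb_def, if_neg hc, max_eq_left hs, Set.mem_setOf_eq]
  -- ## Moments of `b`.
  have hbL2 : ∀ s : ℝ, 0 ≤ s → MemLp (b s) 2 μ :=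
    fun s hs => (hL2 s hs).ae_eq (hbae s hs).symm
  have hcov' : ∀ u v : ℝ, 0 ≤ u → 0 ≤ v →
      ∫ ω, b u ω * b v ω ∂μ = (u ^ (2*H) + v ^ (2*H) - |u - v| ^ (2*H)) / 2 := by
    intro u v hu hv
    have hae : (fun ω => b u ω * b v ω) =ᵐ[μ] fun ω => β u ω * β v ω :=
      (hbae u hu).mul (hbae v hv)
    rw [integral_congr_ae hae]
    exact hcov u v hu hv
  have hsq : ∀ u : ℝ, 0 ≤ u → ∫ ω, b u ω * b u ω ∂μ = u ^ (2*H) := by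
    intro u hu
    rw [hcov' u u hu hu, sub_self, abs_zero, Real.zero_rpow (ne_of_gt hp0)]
    ring
  have hEsq : ∀ t s : ℝ, 0 ≤ s → s ≤ t →
      ∫ ω, (b t ω - b s ω) * (b t ω - b s ω) ∂μ = (t - s) ^ (2*H) := by
    intro t s hs hst
    have ht : (0:ℝ) ≤ t := hs.trans hst
    have htt := hsq t ht
    have hss := hsq s hs
    have hts := hcov' t s ht hs
    rw [abs_of_nonneg (sub_nonneg.mpr hst)] at hts
    have hint_tt : Integrable (fun ω => b t ω * b t ω) μ :=
      l2_integrable_mul (hbL2 t ht) (hbL2 t ht)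
    have hint_ss : Integrable (fun ω => b s ω * b s ω) μ :=
      l2_integrable_mul (hbL2 s hs) (hbL2 s hs)
    have hint_ts : Integrable (fun ω => b t ω * b s ω) μ :=
      l2_integrable_mul (hbL2 t ht) (hbL2 s hs)
    have expand : ∫ ω, (b t ω - b s ω) * (b t ω - b s ω) ∂μ
        = ∫ ω, b t ω * b t ω ∂μ - 2 * ∫ ω, b t ω * b s ω ∂μ + ∫ ω, b s ω * b s ω ∂μ := by
      have e1 : (fun ω => (b t ω - b s ω) * (b t ω - b s ω))
          = fun ω => (b t ω * b t ω - 2 * (b t ω * b s ω)) + b s ω * b s ω := by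
        funext ω; ring
      have A1 : ∫ ω, (b t ω * b t ω - 2 * (b t ω * b s ω)) + b s ω * b s ω ∂μ
          = (∫ ω, b t ω * b t ω - 2 * (b t ω * b s ω) ∂μ) + ∫ ω, b s ω * b s ω ∂μ :=
        integral_add (hint_tt.sub (hint_ts.const_mul 2)) hint_ss
      have A2 : ∫ ω, b t ω * b t ω - 2 * (b t ω * b s ω) ∂μ
          = (∫ ω, b t ω * b t ω ∂μ) - ∫ ω, 2 * (b t ω * b s ω) ∂μ :=
        integral_sub hint_tt (hint_ts.const_mul 2)
      rw [e1, A1, A2, integral_const_mul]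
    rw [expand, htt, hss, hts]
    ring
  -- ## The constant.
  have hGamma : 0 < Real.Gamma (2*H+1) := Real.Gamma_pos_of_pos (by linarith)
  refine ⟨4 + 2 * Real.Gamma (2*H+1), by linarith, ?_⟩
  intro lam hlam t ht
  -- ## Deterministic integral facts.
  have hgc : Continuous fun s => lam * Real.exp (-(lam * (t - s))) :=
    continuous_const.mul (Real.continuous_exp.comp (by fun_prop))
  have hgnn : ∀ s : ℝ, 0 ≤ lam * Real.exp (-(lam * (t - s))) :=
    fun s => mul_nonneg hlam.le (Real.exp_pos _).le
  have hgint : ∫ s in (0:ℝ)..t, lam * Real.exp (-(lam * (t - s)))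
      = 1 - Real.exp (-(lam * t)) := by
    have hderiv : ∀ s ∈ Set.uIcc (0:ℝ) t,
        HasDerivAt (fun u => Real.exp (-(lam * (t - u))))
          (lam * Real.exp (-(lam * (t - s)))) s := by
      intro s _
      have h1 : HasDerivAt (fun u : ℝ => -(lam * (t - u))) lam s := by
        have h2 : HasDerivAt (fun u : ℝ => lam * u - lam * t) lam s := by
          simpa using ((hasDerivAt_id s).const_mul lam).sub_const (lam * t)
        convert h2 using 2 with u
        ring
      simpa [mul_comm] using h1.exp
    have hint : IntervalIntegrable (fun s => lam * Real.exp (-(lam * (t - s)))) volume 0 t :=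
      hgc.intervalIntegrable 0 t
    rw [intervalIntegral.integral_eq_sub_of_hasDerivAt hderiv hint]
    simp
  have hgIoc : ∫ s in Set.Ioc (0:ℝ) t, lam * Real.exp (-(lam * (t - s))) ≤ 1 := by
    rw [← intervalIntegral.integral_of_le ht, hgint]
    have := Real.exp_pos (-(lam * t))
    linarith
  -- (D2): the Gamma-function bound.
  have hD2 : ∫ s in Set.Ioc (0:ℝ) t, lam * Real.exp (-(lam * (t - s))) * (t - s) ^ (2*H)
      ≤ Real.Gamma (2*H+1) * lam ^ (-(2*H)) := by
    rw [← intervalIntegral.integral_of_le ht]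
    have h1 : ∫ s in (0:ℝ)..t, lam * Real.exp (-(lam*(t-s))) * (t-s)^(2*H)
        = ∫ u in (t-t)..(t-0), lam * Real.exp (-(lam*u)) * u^(2*H) :=
      intervalIntegral.integral_comp_sub_left (fun u => lam * Real.exp (-(lam*u)) * u^(2*H)) t
    rw [h1, show t - t = (0:ℝ) by ring, sub_zero]
    have h2 : Set.EqOn (fun u => lam * Real.exp (-(lam*u)) * u^(2*H))
        (fun u => lam ^ (-(2*H)) * (lam * (Real.exp (-(lam*u)) * (lam*u)^(2*H))))
        (Set.uIcc 0 t) := by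
      intro u hu
      rw [Set.uIcc_of_le ht] at hu
      have hu0 : 0 ≤ u := hu.1
      simp only
      rw [Real.mul_rpow hlam.le hu0, Real.rpow_neg hlam.le]
      have : (lam ^ (2*H)) ≠ 0 := ne_of_gt (Real.rpow_pos_of_pos hlam _)
      field_simp
    rw [intervalIntegral.integral_congr h2, intervalIntegral.integral_const_mul]
    have h3 : ∫ u in (0:ℝ)..t, lam * (Real.exp (-(lam*u)) * (lam*u)^(2*H))
        = ∫ x in (0:ℝ)..(lam*t), Real.exp (-x) * x^(2*H) := by
      rw [intervalIntegral.integral_const_mul,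
        intervalIntegral.integral_comp_mul_left (fun x => Real.exp (-x) * x^(2*H))
          (ne_of_gt hlam),
        mul_zero, smul_eq_mul, ← mul_assoc, mul_inv_cancel₀ (ne_of_gt hlam), one_mul]
    rw [h3]
    have h4 : ∫ x in (0:ℝ)..(lam*t), Real.exp (-x) * x^(2*H) ≤ Real.Gamma (2*H+1) := by
      have hG : Real.Gamma (2*H+1) = ∫ x in Set.Ioi (0:ℝ), Real.exp (-x) * x^(2*H) := by
        rw [Real.Gamma_eq_integral (by linarith : (0:ℝ) < 2*H+1)]
        norm_num
      rw [intervalIntegral.integral_of_le (mul_nonneg hlam.le ht), hG]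
      apply setIntegral_mono_set
      · have := Real.GammaIntegral_convergent (by linarith : (0:ℝ) < 2*H+1)
        simpa using this
      · filter_upwards [ae_restrict_mem measurableSet_Ioi] with x hx
        exact mul_nonneg (Real.exp_pos _).le (Real.rpow_nonneg (le_of_lt hx) _)
      · exact HasSubset.Subset.eventuallyLE Set.Ioc_subset_Ioi_self
    calc lam ^ (-(2*H)) * ∫ x in (0:ℝ)..(lam*t), Real.exp (-x) * x^(2*H)
        ≤ lam ^ (-(2*H)) * Real.Gamma (2*H+1) :=
          mul_le_mul_of_nonneg_left h4 (Real.rpow_nonneg hlam.le _)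
      _ = Real.Gamma (2*H+1) * lam ^ (-(2*H)) := mul_comm _ _
  -- (D3): the bound on the deterministic part.
  have hD3 : Real.exp (-(lam * t)) ^ 2 * t ^ (2*H) ≤ 2 * lam ^ (-(2*H)) := by
    set x := lam * t with hx
    have hx0 : 0 ≤ x := mul_nonneg hlam.le ht
    have hkey : Real.exp (-x) ^ 2 * x ^ (2*H) ≤ 2 := by
      rcases le_total x 1 with hx1 | hx1
      · have h1 : x ^ (2*H) ≤ 1 := Real.rpow_le_one hx0 hx1 hp0.le
        have h2 : Real.exp (-x) ≤ 1 := Real.exp_le_one_iff.mpr (by linarith)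
        have h3 : (0:ℝ) ≤ Real.exp (-x) := (Real.exp_pos _).le
        nlinarith [Real.rpow_nonneg hx0 (2*H)]
      · have h1 : x ^ (2*H) ≤ x ^ (2:ℝ) := Real.rpow_le_rpow_of_exponent_le hx1 hp2
        have h2 : x ^ (2:ℝ) = x ^ 2 := Real.rpow_two x
        have h3 : x * Real.exp (-x) ≤ 1 := by
          have := Real.add_one_le_exp x
          have hex : 0 < Real.exp x := Real.exp_pos x
          rw [Real.exp_neg, mul_inv_le_iff₀ hex]
          linarith
        have h4 : 0 ≤ x * Real.exp (-x) := mul_nonneg hx0 (Real.exp_pos _).le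
        have h5 : (x * Real.exp (-x))^2 ≤ 1 := by nlinarith
        have h6 : Real.exp (-x) ^ 2 * x ^ (2*H) ≤ Real.exp (-x)^2 * x^2 :=
          mul_le_mul_of_nonneg_left (h2 ▸ h1) (sq_nonneg _)
        nlinarith
    have hteq : t ^ (2*H) = lam ^ (-(2*H)) * x ^ (2*H) := by
      rw [hx, Real.mul_rpow hlam.le ht, Real.rpow_neg hlam.le]
      field_simp
    rw [hteq]
    have hl : 0 ≤ lam ^ (-(2*H)) := Real.rpow_nonneg hlam.le _
    nlinarith [hkey, hl, sq_nonneg (Real.exp (-x))]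
  -- ## The Fubini computation for `W`.
  set ν : Measure ℝ := volume.restrict (Set.Ioc 0 t) with hν
  set F : ℝ × Ω → ℝ := fun q =>
    (lam * Real.exp (-(lam * (t - q.1)))) * ((b t q.2 - b q.1 q.2) * (b t q.2 - b q.1 q.2))
    with hF_def
  set W : Ω → ℝ := fun ω => ∫ s in Set.Ioc (0:ℝ) t,
    (lam * Real.exp (-(lam * (t - s)))) * ((b t ω - b s ω) * (b t ω - b s ω)) with hW_def
  have hFsm : StronglyMeasurable F := by
    have hsm1 : StronglyMeasurable fun q : ℝ × Ω => b t q.2 :=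
      (hbSM t).comp_measurable measurable_snd
    have hsm2 : StronglyMeasurable fun q : ℝ × Ω => b q.1 q.2 := hbjoint
    have hsm3 : StronglyMeasurable fun q : ℝ × Ω => lam * Real.exp (-(lam * (t - q.1))) :=
      hgc.stronglyMeasurable.comp_measurable measurable_fst
    exact hsm3.mul ((hsm1.sub hsm2).mul (hsm1.sub hsm2))
  have hF_ae_int : ∀ᵐ s ∂ν, Integrable (fun ω => F (s, ω)) μ := by
    filter_upwards [ae_restrict_mem measurableSet_Ioc] with s hs
    have hmem : MemLp (fun ω => b t ω - b s ω) 2 μ := (hbL2 t ht).sub (hbL2 s hs.1.le)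
    have h' := (l2_integrable_mul hmem hmem).const_mul (lam * Real.exp (-(lam * (t - s))))
    simpa [hF_def] using h'
  have hcrpow : Continuous fun s : ℝ => (t - s) ^ (2*H) := by
    have h1 : Continuous fun x : ℝ => x ^ (2*H) :=
      continuous_iff_continuousAt.mpr fun x => Real.continuousAt_rpow_const x _ (Or.inr hp0.le)
    exact h1.comp (continuous_const.sub continuous_id)
  have hnorm : (fun s => ∫ ω, ‖F (s, ω)‖ ∂μ)
      =ᵐ[ν] fun s => (lam * Real.exp (-(lam * (t - s)))) * (t - s) ^ (2*H) := by
    filter_upwards [ae_restrict_mem measurableSet_Ioc] with s hs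
    have e1 : (fun ω => ‖F (s, ω)‖) = fun ω =>
        (lam * Real.exp (-(lam * (t - s)))) * ((b t ω - b s ω) * (b t ω - b s ω)) := by
      funext ω
      rw [Real.norm_of_nonneg]
      exact mul_nonneg (hgnn s) (mul_self_nonneg _)
    rw [e1, integral_const_mul, hEsq t s hs.1.le hs.2]
  have hexpl_int : Integrable
      (fun s => (lam * Real.exp (-(lam * (t - s)))) * (t - s) ^ (2*H)) ν :=
    Continuous.integrableOn_Ioc (hgc.mul hcrpow)
  have hF_norm_int : Integrable (fun s => ∫ ω, ‖F (s, ω)‖ ∂μ) ν := hexpl_int.congr hnorm.symm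
  have hFint : Integrable F (ν.prod μ) :=
    (integrable_prod_iff hFsm.aestronglyMeasurable).mpr ⟨hF_ae_int, hF_norm_int⟩
  have hWint : Integrable W μ := hFint.integral_prod_right
  have hWval : ∫ ω, W ω ∂μ
      = ∫ s in Set.Ioc (0:ℝ) t, (lam * Real.exp (-(lam * (t - s)))) * (t - s) ^ (2*H) := by
    have hswap := integral_integral_swap (f := fun s ω => F (s, ω)) hFint
    rw [hW_def]
    rw [← hswap]
    apply integral_congr_ae
    filter_upwards [ae_restrict_mem measurableSet_Ioc] with s hs
    have e2 : ∫ ω, F (s, ω) ∂μ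
        = (lam * Real.exp (-(lam * (t - s)))) * ∫ ω, (b t ω - b s ω) * (b t ω - b s ω) ∂μ := by
      simp only [hF_def]
      exact integral_const_mul _ _
    rw [e2, hEsq t s hs.1.le hs.2]
  -- ## The pointwise a.e. bound.
  have hbt2int : Integrable (fun ω => (Real.exp (-(lam*t)) * b t ω)^2) μ := by
    have e1 : (fun ω => (Real.exp (-(lam*t)) * b t ω)^2)
        = fun ω => Real.exp (-(lam*t))^2 * (b t ω * b t ω) := by
      funext ω; ring
    rw [e1]
    exact (l2_integrable_mul (hbL2 t ht) (hbL2 t ht)).const_mul _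
  have hptwise : ∀ ω, ω ∉ N → (fracOU β lam t ω)^2
      ≤ 2 * (Real.exp (-(lam*t)) * b t ω)^2 + 2 * W ω := by
    intro ω hω
    have heq : ∀ s ∈ Set.uIcc (0:ℝ) t, β s ω = b s ω := by
      intro s hs
      rw [Set.uIcc_of_le ht] at hs
      simp only [hb_def, if_neg hω, max_eq_left hs.1]
    -- pathwise identification of fracOU
    have hβt : β t ω = b t ω := heq t Set.right_mem_uIcc
    have hIcong : ∫ s in (0:ℝ)..t, Real.exp (-(lam * (t - s))) * β s ω
        = ∫ s in (0:ℝ)..t, Real.exp (-(lam * (t - s))) * b s ω :=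
      intervalIntegral.integral_congr (fun s hs => by rw [heq s hs])
    have hint1 : IntervalIntegrable
        (fun s => (lam * Real.exp (-(lam * (t - s)))) * b t ω) volume 0 t :=
      (hgc.mul continuous_const).intervalIntegrable 0 t
    have hint2 : IntervalIntegrable
        (fun s => (lam * Real.exp (-(lam * (t - s)))) * b s ω) volume 0 t :=
      (hgc.mul (hbcont ω)).intervalIntegrable 0 t
    have hsplit : ∫ s in (0:ℝ)..t, (lam * Real.exp (-(lam * (t - s)))) * (b t ω - b s ω)
        = (∫ s in (0:ℝ)..t, (lam * Real.exp (-(lam * (t - s)))) * b t ω)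
          - ∫ s in (0:ℝ)..t, (lam * Real.exp (-(lam * (t - s)))) * b s ω := by
      rw [← intervalIntegral.integral_sub hint1 hint2]
      apply intervalIntegral.integral_congr
      intro s _
      simp only
      ring
    have hconst : ∫ s in (0:ℝ)..t, (lam * Real.exp (-(lam * (t - s)))) * b t ω
        = (1 - Real.exp (-(lam * t))) * b t ω := by
      rw [intervalIntegral.integral_mul_const, hgint]
    have hpull : ∫ s in (0:ℝ)..t, (lam * Real.exp (-(lam * (t - s)))) * b s ω
        = lam * ∫ s in (0:ℝ)..t, Real.exp (-(lam * (t - s))) * b s ω := by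
      rw [← intervalIntegral.integral_const_mul]
      apply intervalIntegral.integral_congr
      intro s _
      simp only
      ring
    have hZid : fracOU β lam t ω = Real.exp (-(lam*t)) * b t ω
        + ∫ s in (0:ℝ)..t, (lam * Real.exp (-(lam * (t - s)))) * (b t ω - b s ω) := by
      rw [fracOU, hβt, hIcong, hsplit, hconst, hpull]
      ring
    -- pathwise Cauchy-Schwarz
    have hCS : (∫ s in (0:ℝ)..t, (lam * Real.exp (-(lam * (t - s)))) * (b t ω - b s ω)) ^ 2
        ≤ W ω := by
      set k : ℝ → ℝ := fun s => b t ω - b s ω with hk_def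
      have hk : Continuous k := continuous_const.sub (hbcont ω)
      have hsqc : Continuous fun s => Real.sqrt (lam * Real.exp (-(lam * (t - s)))) :=
        Real.continuous_sqrt.comp hgc
      have hf2 : Integrable
          (fun s => Real.sqrt (lam * Real.exp (-(lam * (t - s)))) ^ 2) ν :=
        Continuous.integrableOn_Ioc (hsqc.pow 2)
      have hk2 : Integrable
          (fun s => (Real.sqrt (lam * Real.exp (-(lam * (t - s)))) * k s) ^ 2) ν :=
        Continuous.integrableOn_Ioc ((hsqc.mul hk).pow 2)
      have hfk : Integrable (fun s => Real.sqrt (lam * Real.exp (-(lam * (t - s))))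
          * (Real.sqrt (lam * Real.exp (-(lam * (t - s)))) * k s)) ν :=
        Continuous.integrableOn_Ioc (hsqc.mul (hsqc.mul hk))
      have hcs := cs_integral ν hf2 hk2 hfk
      have e1 : ∀ s, Real.sqrt (lam * Real.exp (-(lam * (t - s))))
          * (Real.sqrt (lam * Real.exp (-(lam * (t - s)))) * k s)
          = (lam * Real.exp (-(lam * (t - s)))) * k s := by
        intro s
        rw [← mul_assoc, Real.mul_self_sqrt (hgnn s)]
      have e2 : ∀ s, Real.sqrt (lam * Real.exp (-(lam * (t - s)))) ^ 2
          = lam * Real.exp (-(lam * (t - s))) := fun s => Real.sq_sqrt (hgnn s)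
      have e3 : ∀ s, (Real.sqrt (lam * Real.exp (-(lam * (t - s)))) * k s) ^ 2
          = (lam * Real.exp (-(lam * (t - s)))) * (k s * k s) := by
        intro s
        rw [mul_pow, e2, pow_two]
      simp only [e1, e2, e3] at hcs
      rw [intervalIntegral.integral_of_le ht]
      calc (∫ s in Set.Ioc (0:ℝ) t, (lam * Real.exp (-(lam * (t - s)))) * k s) ^ 2
          ≤ (∫ s in Set.Ioc (0:ℝ) t, lam * Real.exp (-(lam * (t - s))))
            * ∫ s in Set.Ioc (0:ℝ) t, (lam * Real.exp (-(lam * (t - s)))) * (k s * k s) := by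
            exact_mod_cast hcs
        _ ≤ 1 * ∫ s in Set.Ioc (0:ℝ) t,
              (lam * Real.exp (-(lam * (t - s)))) * (k s * k s) := by
            apply mul_le_mul_of_nonneg_right hgIoc
            apply setIntegral_nonneg measurableSet_Ioc
            intro s _
            exact mul_nonneg (hgnn s) (mul_self_nonneg _)
        _ = W ω := by rw [one_mul, hW_def]
    rw [hZid]
    nlinarith [hCS, sq_nonneg (Real.exp (-(lam*t)) * b t ω
      - ∫ s in (0:ℝ)..t, (lam * Real.exp (-(lam * (t - s)))) * (b t ω - b s ω))]
  have hae_bound : ∀ᵐ ω ∂μ, (fracOU β lam t ω)^2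
      ≤ 2 * (Real.exp (-(lam*t)) * b t ω)^2 + 2 * W ω := by
    apply ae_iff.mpr
    apply measure_mono_null _ hN0
    intro ω hω
    by_contra hN
    exact hω (hptwise ω hN)
  -- ## Conclusion.
  have hRHSint : Integrable (fun ω => 2 * (Real.exp (-(lam*t)) * b t ω)^2 + 2 * W ω) μ :=
    (hbt2int.const_mul 2).add (hWint.const_mul 2)
  have hmono := integral_mono_of_nonneg (Filter.Eventually.of_forall fun ω => sq_nonneg _)
    hRHSint hae_bound
  have hsplit2 : ∫ ω, (2 * (Real.exp (-(lam*t)) * b t ω)^2 + 2 * W ω) ∂μ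
      = 2 * (∫ ω, (Real.exp (-(lam*t)) * b t ω)^2 ∂μ) + 2 * ∫ ω, W ω ∂μ := by
    rw [integral_add (hbt2int.const_mul 2) (hWint.const_mul 2), integral_const_mul,
      integral_const_mul]
  have hA2 : ∫ ω, (Real.exp (-(lam*t)) * b t ω)^2 ∂μ
      = Real.exp (-(lam*t))^2 * t^(2*H) := by
    have e1 : (fun ω => (Real.exp (-(lam*t)) * b t ω)^2)
        = fun ω => Real.exp (-(lam*t))^2 * (b t ω * b t ω) := by
      funext ω; ring
    rw [e1, integral_const_mul, hsq t ht]
  have hWle : ∫ ω, W ω ∂μ ≤ Real.Gamma (2*H+1) * lam ^ (-(2*H)) := hWval ▸ hD2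
  calc ∫ ω, (fracOU β lam t ω)^2 ∂μ
      ≤ ∫ ω, (2 * (Real.exp (-(lam*t)) * b t ω)^2 + 2 * W ω) ∂μ := hmono
    _ = 2 * (Real.exp (-(lam*t))^2 * t^(2*H)) + 2 * ∫ ω, W ω ∂μ := by
        rw [hsplit2, hA2]
    _ ≤ 2 * (2 * lam ^ (-(2*H))) + 2 * (Real.Gamma (2*H+1) * lam ^ (-(2*H))) := by
        have := hD3
        linarith [hWle]
    _ = (4 + 2 * Real.Gamma (2*H+1)) * lam ^ (-(2*H)) := by ring
end

section
/- Let H ∈ (0, 1/2) and let (β^H(t))_{t≥0} be a real-valued fractional Brownian motion with Hurst index H. Then there exists a constant C_H ∈ (0,∞) such that for every λ ∈ (0,∞) and every t ≥ 0, the fractional Ornstein–Uhlenbeck variable 𝒵^{H,λ}(t) = β^H(t) − λ∫₀^t e^{−λ(t−s)} β^H(s) ds satisfies E[|𝒵^{H,λ}(t)|²] ≤ C_H λ^{−2H}. -/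
open MeasureTheory

open Set Filter

namespace FOUaux

variable {Ω : Type*} [MeasurableSpace Ω] {μ : Measure Ω}

lemma int_mul {f g : Ω → ℝ} (hf : MemLp f 2 μ) (hg : MemLp g 2 μ) :
    Integrable (fun ω => f ω * g ω) μ := by
  refine Integrable.mono' ((hf.integrable_sq.add hg.integrable_sq).div_const 2)
    (hf.aestronglyMeasurable.mul hg.aestronglyMeasurable) ?_
  filter_upwards with ω
  have h := sq_nonneg (|f ω| - |g ω|)
  have hn : ‖f ω * g ω‖ = |f ω| * |g ω| := by rw [Real.norm_eq_abs, abs_mul]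
  rw [hn]
  simp only [Pi.add_apply]
  nlinarith [sq_abs (f ω), sq_abs (g ω)]

lemma jointMeas (μ : Measure Ω) [SFinite μ] (β : ℝ → Ω → ℝ)
    (hmeas : ∀ t : ℝ, AEStronglyMeasurable (β t) μ)
    (hpath : ∀ᵐ ω ∂μ, ContinuousOn (fun t => β t ω) (Set.Ici 0)) (t : ℝ) :
    AEStronglyMeasurable (fun p : ℝ × Ω => β p.1 p.2)
      ((volume.restrict (Set.Ioc 0 t)).prod μ) := by
  set P := (volume.restrict (Set.Ioc 0 t)).prod μ with hP
  set β' : ℝ → Ω → ℝ := fun x => (hmeas x).mk (β x) with hβ'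
  have hβ'meas : ∀ x, StronglyMeasurable (β' x) := fun x => (hmeas x).stronglyMeasurable_mk
  have hβ'ae : ∀ x, β x =ᵐ[μ] β' x := fun x => (hmeas x).ae_eq_mk
  set φ : ℕ → ℝ → ℝ := fun n s => (⌈s * (n+1)⌉ : ℤ) / (n+1) with hφ
  have hFn : ∀ n : ℕ, AEStronglyMeasurable (fun p : ℝ × Ω => β (φ n p.1) p.2) P := by
    intro n
    refine ⟨fun p => β' (φ n p.1) p.2, ?_, ?_⟩
    · -- strongly measurable
      have hG : Measurable (fun q : Ω × ℤ => β' ((q.2 : ℝ) / (n+1)) q.1) :=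
        measurable_from_prod_countable_left (fun m => by
          exact (hβ'meas ((m : ℝ) / (n+1))).measurable)
      have heq : (fun p : ℝ × Ω => β' (φ n p.1) p.2) =
          (fun q : Ω × ℤ => β' ((q.2 : ℝ) / (n+1)) q.1) ∘
            (fun p : ℝ × Ω => (p.2, ⌈p.1 * (n+1)⌉)) := rfl
      rw [heq]
      exact (hG.comp (measurable_snd.prodMk
        (Int.measurable_ceil.comp (measurable_fst.mul_const _)))).stronglyMeasurable
    · -- a.e. equality
      have hsub : {p : ℝ × Ω | ¬ β (φ n p.1) p.2 = β' (φ n p.1) p.2} ⊆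
          ⋃ m : ℤ, ({s : ℝ | ⌈s * (n+1)⌉ = m} ×ˢ
            {ω : Ω | ¬ β ((m : ℝ) / (n+1)) ω = β' ((m : ℝ) / (n+1)) ω}) := by
        intro p hp
        exact Set.mem_iUnion.2 ⟨⌈p.1 * (n+1)⌉, ⟨rfl, by simpa [hφ] using hp⟩⟩
      have hnull : P {p : ℝ × Ω | ¬ β (φ n p.1) p.2 = β' (φ n p.1) p.2} = 0 := by
        refine measure_mono_null hsub (measure_iUnion_null fun m => ?_)
        rw [hP, Measure.prod_prod]
        have h0 : μ {ω : Ω | ¬ β ((m : ℝ) / (n+1)) ω = β' ((m : ℝ) / (n+1)) ω} = 0 :=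
          ae_iff.1 (hβ'ae ((m : ℝ) / (n+1)))
        rw [h0, mul_zero]
      exact ae_iff.2 hnull
  have htend : ∀ᵐ p ∂P, Tendsto (fun n => β (φ n p.1) p.2) atTop (nhds (β p.1 p.2)) := by
    have h1 : ∀ᵐ p ∂P, ContinuousOn (fun x => β x p.2) (Set.Ici 0) := by
      have h0 : μ {ω | ¬ ContinuousOn (fun x => β x ω) (Set.Ici 0)} = 0 := ae_iff.1 hpath
      refine ae_iff.2 (measure_mono_null (t := Set.univ ×ˢ {ω | ¬ ContinuousOn (fun x => β x ω) (Set.Ici 0)}) (fun p hp => ?_) ?_)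
      · exact Set.mem_prod.2 ⟨Set.mem_univ p.1,
          (hp : ¬ ContinuousOn (fun x => β x p.2) (Set.Ici 0))⟩
      · rw [hP, Measure.prod_prod, h0, mul_zero]
    have h2 : ∀ᵐ p ∂P, p.1 ∈ Set.Ioc 0 t := by
      refine ae_iff.2 (measure_mono_null (fun p hp => ?_)
        (show P (({s : ℝ | s ∉ Set.Ioc 0 t}) ×ˢ Set.univ) = 0 from ?_))
      · exact Set.mem_prod.2 ⟨hp, Set.mem_univ _⟩
      · rw [hP, Measure.prod_prod]
        have hempty : {s : ℝ | s ∉ Set.Ioc 0 t} ∩ Set.Ioc 0 t = ∅ := by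
          ext x; simp only [Set.mem_inter_iff, Set.mem_setOf_eq, Set.mem_empty_iff_false,
            iff_false, not_and]
          tauto
        have : (volume.restrict (Set.Ioc 0 t)) {s : ℝ | s ∉ Set.Ioc 0 t} = 0 := by
          rw [Measure.restrict_apply' measurableSet_Ioc, hempty, measure_empty]
        rw [this, zero_mul]
    filter_upwards [h1, h2] with p hcont hmem
    have hs0 : 0 < p.1 := hmem.1
    have hφge : ∀ n : ℕ, p.1 ≤ φ n p.1 := by
      intro n
      have h1 : (0:ℝ) < (n:ℝ) + 1 := by positivity
      show p.1 ≤ (⌈p.1 * ((n:ℝ)+1)⌉ : ℤ) / ((n:ℝ)+1)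
      rw [le_div_iff₀ h1]
      exact_mod_cast Int.le_ceil (p.1 * (n+1))
    have hφle : ∀ n : ℕ, φ n p.1 ≤ p.1 + 1/((n:ℝ)+1) := by
      intro n
      have h1 : (0:ℝ) < (n:ℝ) + 1 := by positivity
      show ((⌈p.1 * ((n:ℝ)+1)⌉ : ℤ) : ℝ) / ((n:ℝ)+1) ≤ p.1 + 1/((n:ℝ)+1)
      rw [div_le_iff₀ h1]
      have := Int.ceil_lt_add_one (p.1 * (n+1))
      have : ((⌈p.1 * ((n:ℝ)+1)⌉ : ℝ)) ≤ p.1 * ((n:ℝ)+1) + 1 := le_of_lt this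
      calc ((⌈p.1 * ((n:ℝ)+1)⌉ : ℝ)) ≤ p.1 * ((n:ℝ)+1) + 1 := this
        _ = (p.1 + 1/((n:ℝ)+1)) * ((n:ℝ)+1) := by field_simp
    have hφtend : Tendsto (fun n : ℕ => φ n p.1) atTop (nhds p.1) := by
      refine tendsto_of_tendsto_of_tendsto_of_le_of_le tendsto_const_nhds ?_ hφge hφle
      have h : Tendsto (fun n : ℕ => p.1 + 1/((n:ℝ)+1)) atTop (nhds (p.1 + 0)) :=
        (tendsto_const_nhds (x := p.1)).add tendsto_one_div_add_atTop_nhds_zero_nat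
      simpa using h
    have hφmem : ∀ n, φ n p.1 ∈ Set.Ici (0:ℝ) := fun n => le_trans (le_of_lt hs0) (hφge n)
    have hφtend' : Tendsto (fun n : ℕ => φ n p.1) atTop (nhdsWithin p.1 (Set.Ici 0)) :=
      tendsto_nhdsWithin_of_tendsto_nhds_of_eventually_within _ hφtend
        (Filter.Eventually.of_forall hφmem)
    exact (hcont p.1 (le_of_lt hs0)).tendsto.comp hφtend'
  exact aestronglyMeasurable_of_tendsto_ae atTop hFn htend

lemma cov_inc (μ : Measure Ω) (β : ℝ → Ω → ℝ) (H : ℝ) (hH0 : 0 < H)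
    (hL2 : ∀ r : ℝ, 0 ≤ r → MemLp (β r) 2 μ)
    (hcov : ∀ t s : ℝ, 0 ≤ t → 0 ≤ s →
      ∫ ω, β t ω * β s ω ∂μ = (t ^ (2*H) + s ^ (2*H) - |t - s| ^ (2*H)) / 2)
    {s t : ℝ} (hs : 0 ≤ s) (hst : s ≤ t) :
    ∫ ω, (β t ω - β s ω)^2 ∂μ = (t - s)^(2*H) := by
  have ht : 0 ≤ t := hs.trans hst
  have h2H : (2*H) ≠ 0 := by positivity
  have htt := hcov t t ht ht
  have hts := hcov t s ht hs
  have hst' := hcov s t hs ht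
  have hss := hcov s s hs hs
  rw [show |t - t| = (0:ℝ) by simp, Real.zero_rpow h2H] at htt
  rw [show |s - s| = (0:ℝ) by simp, Real.zero_rpow h2H] at hss
  rw [show |t - s| = t - s by rw [abs_of_nonneg (by linarith)]] at hts
  rw [show |s - t| = t - s by rw [abs_sub_comm, abs_of_nonneg (by linarith)]] at hst'
  have Itt := int_mul (hL2 t ht) (hL2 t ht)
  have Its := int_mul (hL2 t ht) (hL2 s hs)
  have Ist := int_mul (hL2 s hs) (hL2 t ht)
  have Iss := int_mul (hL2 s hs) (hL2 s hs)
  have hexp : (fun ω => (β t ω - β s ω)^2) =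
      (fun ω => (β t ω * β t ω - β t ω * β s ω) - (β s ω * β t ω - β s ω * β s ω)) := by
    funext ω; ring
  have I1 : Integrable (fun ω => β t ω * β t ω - β t ω * β s ω) μ := Itt.sub Its
  have I2 : Integrable (fun ω => β s ω * β t ω - β s ω * β s ω) μ := Ist.sub Iss
  rw [hexp, integral_sub I1 I2, integral_sub Itt Its, integral_sub Ist Iss,
    htt, hts, hst', hss]
  ring


end FOUaux

open FOUaux in
/-- Moment bound for the fractional Ornstein–Uhlenbeck process, case `H ∈ (0,1/2)`:
there is `C_H ∈ (0,∞)` such that `E[|𝒵^{H,λ}(t)|²] ≤ C_H λ^{-2H}` for all `λ > 0`, `t ≥ 0`. -/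
theorem stmt8
    {Ω : Type*} [MeasurableSpace Ω] (μ : Measure Ω) [IsProbabilityMeasure μ]
    (H : ℝ) (hH : H ∈ Set.Ioo (0 : ℝ) (1/2))
    (β : ℝ → Ω → ℝ)
    (hmeas : ∀ t : ℝ, AEStronglyMeasurable (β t) μ)
    (hpath : ∀ᵐ ω ∂μ, ContinuousOn (fun t => β t ω) (Set.Ici 0) ∧ β 0 ω = 0)
    (hL2 : ∀ t : ℝ, 0 ≤ t → MemLp (β t) 2 μ)
    (hmean : ∀ t : ℝ, 0 ≤ t → ∫ ω, β t ω ∂μ = 0)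
    (hcov : ∀ t s : ℝ, 0 ≤ t → 0 ≤ s →
      ∫ ω, β t ω * β s ω ∂μ = (t ^ (2*H) + s ^ (2*H) - |t - s| ^ (2*H)) / 2) :
    ∃ C : ℝ, 0 < C ∧ ∀ lam : ℝ, 0 < lam → ∀ t : ℝ, 0 ≤ t →
      ∫ ω, (fracOU β lam t ω) ^ 2 ∂μ ≤ C * lam ^ (-(2*H)) := by
  obtain ⟨hH0, hH2⟩ := hH
  have h2H0 : (0:ℝ) < 2*H := by linarith
  have h2H1 : 2*H < 1 := by linarith
  have hΓpos : 0 < Real.Gamma (2*H+1) := Real.Gamma_pos_of_pos (by linarith)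
  refine ⟨2 + 2 * Real.Gamma (2*H+1), by positivity, ?_⟩
  intro lam hlam t ht
  have hpath' : ∀ᵐ ω ∂μ, ContinuousOn (fun x => β x ω) (Set.Ici 0) := by
    filter_upwards [hpath] with ω h using h.1
  set k : ℝ → ℝ := fun s => Real.exp (-(lam * (t - s))) with hk
  have hkcont : Continuous k := by fun_prop
  have hkpos : ∀ s, 0 < k s := fun s => Real.exp_pos _
  have hkle1 : ∀ s ∈ Set.Icc (0:ℝ) t, k s ≤ 1 := by
    intro s hs
    exact Real.exp_le_one_iff.2 (by nlinarith [hs.2])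
  -- the exponential integral
  have key1 : ∫ s in (0:ℝ)..t, k s * lam = 1 - Real.exp (-(lam*t)) := by
    have hderiv : ∀ x ∈ Set.uIcc (0:ℝ) t,
        HasDerivAt (fun y => Real.exp (-(lam * (t - y)))) (k x * lam) x := by
      intro x _
      have h1 : HasDerivAt (fun y : ℝ => -(lam * (t - y))) lam x := by
        have h2 : HasDerivAt (fun y : ℝ => lam * y - lam * t) lam x := by
          simpa using ((hasDerivAt_id x).const_mul lam).sub_const (lam * t)
        convert h2 using 2 with y
        · ring
      simpa using h1.exp
    have := intervalIntegral.integral_eq_sub_of_hasDerivAt hderiv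
      ((hkcont.mul continuous_const).intervalIntegrable 0 t)
    simpa using this
  have kIoc : ∫ s in Set.Ioc 0 t, k s = (1 - Real.exp (-(lam*t))) / lam := by
    have h1 : ∫ s in (0:ℝ)..t, k s * lam = (∫ s in (0:ℝ)..t, k s) * lam :=
      intervalIntegral.integral_mul_const lam k
    rw [← intervalIntegral.integral_of_le ht, eq_div_iff (ne_of_gt hlam), ← h1, key1]
  have kIoc_le : ∫ s in Set.Ioc 0 t, k s ≤ 1 / lam := by
    rw [kIoc]
    have h0 : 0 < Real.exp (-(lam*t)) := Real.exp_pos _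
    apply div_le_div_of_nonneg_right ?_ hlam.le
    linarith
  have hνfin : IsFiniteMeasure (volume.restrict (Set.Ioc (0:ℝ) t)) :=
    ⟨by rw [Measure.restrict_apply_univ]; exact measure_Ioc_lt_top⟩
  set F : ℝ × Ω → ℝ := fun p => k p.1 * (β t p.2 - β p.1 p.2)^2 with hF
  set P := (volume.restrict (Set.Ioc 0 t)).prod μ with hP
  -- pathwise bound
  have stepA : ∀ᵐ ω ∂μ, (fracOU β lam t ω)^2 ≤
      2 * Real.exp (-(2*lam*t)) * (β t ω)^2 +
      2 * lam * ∫ s in Set.Ioc 0 t, F (s, ω) := by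
    filter_upwards [hpath'] with ω hcont
    set δ : ℝ → ℝ := fun s => β t ω - β s ω with hδ
    have hβcont : ContinuousOn (fun s => β s ω) (Set.Icc 0 t) :=
      hcont.mono (fun x hx => hx.1)
    have hδcont : ContinuousOn δ (Set.Icc 0 t) := continuousOn_const.sub hβcont
    have hIβ : IntegrableOn (fun s => k s * β s ω) (Set.Ioc 0 t) volume :=
      ((hkcont.continuousOn.mul hβcont).integrableOn_Icc).mono_set Set.Ioc_subset_Icc_self
    have hIk : IntegrableOn k (Set.Ioc 0 t) volume :=
      (hkcont.continuousOn.integrableOn_Icc).mono_set Set.Ioc_subset_Icc_self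
    have hIδ : IntegrableOn (fun s => k s * δ s) (Set.Ioc 0 t) volume :=
      ((hkcont.continuousOn.mul hδcont).integrableOn_Icc).mono_set Set.Ioc_subset_Icc_self
    have hIδ2 : IntegrableOn (fun s => k s * δ s ^ 2) (Set.Ioc 0 t) volume :=
      ((hkcont.continuousOn.mul (hδcont.pow 2)).integrableOn_Icc).mono_set
        Set.Ioc_subset_Icc_self
    set Bδ := ∫ s in Set.Ioc 0 t, k s * δ s with hBδ
    set B2 := ∫ s in Set.Ioc 0 t, k s * δ s ^ 2 with hB2
    have hB2nonneg : 0 ≤ B2 := by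
      rw [hB2]
      refine setIntegral_nonneg measurableSet_Ioc (fun s _ => ?_)
      exact mul_nonneg (hkpos s).le (sq_nonneg _)
    have hsplit : Bδ = (∫ s in Set.Ioc 0 t, k s) * β t ω - ∫ s in Set.Ioc 0 t, k s * β s ω := by
      rw [hBδ, ← integral_mul_const, ← integral_sub (hIk.mul_const _) hIβ]
      refine integral_congr_ae (Filter.Eventually.of_forall fun s => ?_)
      simp only [hδ]; ring
    have hZdecomp : fracOU β lam t ω = Real.exp (-(lam*t)) * β t ω + lam * Bδ := by
      show β t ω - lam * ∫ s in (0:ℝ)..t, Real.exp (-(lam * (t - s))) * β s ω = _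
      have hkeq : (fun s => Real.exp (-(lam * (t - s))) * β s ω) =
          fun s => k s * β s ω := rfl
      rw [hkeq, intervalIntegral.integral_of_le ht, hsplit, kIoc]
      field_simp
      ring
    -- Cauchy–Schwarz
    have hpq : Real.HolderConjugate 2 2 := Real.holderConjugate_iff.mpr ⟨one_lt_two, by norm_num⟩
    set f : ℝ → ℝ := fun s => Real.sqrt (k s) with hf
    set g : ℝ → ℝ := fun s => Real.sqrt (k s) * |δ s| with hg
    obtain ⟨M, hM⟩ := (isCompact_Icc (a := (0:ℝ)) (b := t)).exists_bound_of_continuousOn hδcont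
    have hfae : AEStronglyMeasurable f (volume.restrict (Set.Ioc 0 t)) :=
      (Real.continuous_sqrt.comp hkcont).aestronglyMeasurable
    have hδae : AEStronglyMeasurable δ (volume.restrict (Set.Ioc 0 t)) :=
      (hδcont.mono Set.Ioc_subset_Icc_self).aestronglyMeasurable measurableSet_Ioc
    have hgae : AEStronglyMeasurable g (volume.restrict (Set.Ioc 0 t)) :=
      hfae.mul (continuous_abs.comp_aestronglyMeasurable hδae)
    have hsqrtle : ∀ s ∈ Set.Ioc (0:ℝ) t, Real.sqrt (k s) ≤ 1 := by
      intro s hs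
      exact Real.sqrt_le_one.2 (hkle1 s ⟨hs.1.le, hs.2⟩)
    have hfmem : MemLp f (ENNReal.ofReal 2) (volume.restrict (Set.Ioc 0 t)) := by
      refine MemLp.of_bound hfae 1 ?_
      filter_upwards [ae_restrict_mem measurableSet_Ioc] with s hs
      rw [Real.norm_eq_abs, abs_of_nonneg (Real.sqrt_nonneg _)]
      exact hsqrtle s hs
    have hgmem : MemLp g (ENNReal.ofReal 2) (volume.restrict (Set.Ioc 0 t)) := by
      refine MemLp.of_bound hgae (max M 0) ?_
      filter_upwards [ae_restrict_mem measurableSet_Ioc] with s hs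
      have h1 := hsqrtle s hs
      have h2 : ‖δ s‖ ≤ M := hM s ⟨hs.1.le, hs.2⟩
      rw [Real.norm_eq_abs, hg, abs_of_nonneg (mul_nonneg (Real.sqrt_nonneg _) (abs_nonneg _))]
      calc Real.sqrt (k s) * |δ s| ≤ 1 * |δ s| :=
            mul_le_mul_of_nonneg_right h1 (abs_nonneg _)
        _ = ‖δ s‖ := by rw [one_mul, Real.norm_eq_abs]
        _ ≤ max M 0 := h2.trans (le_max_left _ _)
    have hHolder := integral_mul_le_Lp_mul_Lq_of_nonneg hpq
      (Filter.Eventually.of_forall (fun s => Real.sqrt_nonneg (k s)))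
      (Filter.Eventually.of_forall (fun s =>
        mul_nonneg (Real.sqrt_nonneg _) (abs_nonneg _))) hfmem hgmem
    have hfg : ∀ s, f s * g s = k s * |δ s| := by
      intro s
      rw [hf, hg, ← mul_assoc, Real.mul_self_sqrt (hkpos s).le]
    have hf2 : ∀ s, f s ^ (2:ℝ) = k s := by
      intro s
      rw [hf, show (2:ℝ) = ((2:ℕ):ℝ) by norm_num, Real.rpow_natCast, Real.sq_sqrt (hkpos s).le]
    have hg2 : ∀ s, g s ^ (2:ℝ) = k s * δ s ^ 2 := by
      intro s
      rw [hg, show (2:ℝ) = ((2:ℕ):ℝ) by norm_num, Real.rpow_natCast, mul_pow, sq_abs,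
        Real.sq_sqrt (hkpos s).le]
    rw [show (fun a => f a * g a) = fun s => k s * |δ s| from funext hfg] at hHolder
    simp only [show ∀ s, Real.sqrt (k s) ^ (2:ℝ) = k s from hf2,
      show ∀ s, (Real.sqrt (k s) * |δ s|) ^ (2:ℝ) = k s * δ s ^ 2 from hg2] at hHolder
    -- conclude CS
    have habs : |Bδ| ≤ ∫ s in Set.Ioc 0 t, k s * |δ s| := by
      rw [← Real.norm_eq_abs]
      refine (norm_integral_le_integral_norm _).trans (le_of_eq ?_)
      refine integral_congr_ae (Filter.Eventually.of_forall fun s => ?_)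
      show ‖k s * δ s‖ = k s * |δ s|
      rw [Real.norm_eq_abs, abs_mul, abs_of_nonneg (hkpos s).le]
    have hA0 : 0 ≤ ∫ s in Set.Ioc 0 t, k s :=
      setIntegral_nonneg measurableSet_Ioc (fun s _ => (hkpos s).le)
    have hCS : Bδ^2 ≤ (∫ s in Set.Ioc 0 t, k s) * B2 := by
      have h1 : Bδ^2 = |Bδ|^2 := (sq_abs _).symm
      have h2 : |Bδ|^2 ≤ (∫ s in Set.Ioc 0 t, k s * |δ s|)^2 := by
        have hnn : 0 ≤ ∫ s in Set.Ioc 0 t, k s * |δ s| :=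
          setIntegral_nonneg measurableSet_Ioc
            (fun s _ => mul_nonneg (hkpos s).le (abs_nonneg _))
        exact pow_le_pow_left₀ (abs_nonneg _) habs 2
      have h3 : (∫ s in Set.Ioc 0 t, k s * |δ s|)^2 ≤
          ((∫ s in Set.Ioc 0 t, k s) ^ (1/2:ℝ) * B2 ^ (1/2:ℝ))^2 := by
        refine pow_le_pow_left₀ ?_ hHolder 2
        refine setIntegral_nonneg measurableSet_Ioc
          (fun s _ => mul_nonneg (hkpos s).le (abs_nonneg _))
      have h4 : ((∫ s in Set.Ioc 0 t, k s) ^ (1/2:ℝ) * B2 ^ (1/2:ℝ))^2 =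
          (∫ s in Set.Ioc 0 t, k s) * B2 := by
        rw [mul_pow, ← Real.rpow_natCast ((∫ s in Set.Ioc 0 t, k s) ^ (1/2:ℝ)) 2,
          ← Real.rpow_natCast (B2 ^ (1/2:ℝ)) 2, ← Real.rpow_mul hA0, ← Real.rpow_mul hB2nonneg]
        norm_num
      linarith
    have hBδsq : (lam * Bδ)^2 ≤ lam * B2 := by
      have h5 : (∫ s in Set.Ioc 0 t, k s) * B2 ≤ (1/lam) * B2 :=
        mul_le_mul_of_nonneg_right kIoc_le hB2nonneg
      have : Bδ^2 ≤ (1/lam) * B2 := hCS.trans h5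
      have hlam2 : (lam * Bδ)^2 = lam^2 * Bδ^2 := by ring
      rw [hlam2]
      calc lam^2 * Bδ^2 ≤ lam^2 * ((1/lam) * B2) :=
            mul_le_mul_of_nonneg_left this (sq_nonneg _)
        _ = lam * B2 := by field_simp
    -- combine
    rw [hZdecomp]
    have hexpsq : (Real.exp (-(lam*t)))^2 = Real.exp (-(2*lam*t)) := by
      rw [sq, ← Real.exp_add]; ring_nf
    show _ ≤ 2 * Real.exp (-(2*lam*t)) * (β t ω)^2 + 2 * lam * B2
    nlinarith [sq_nonneg (Real.exp (-(lam*t)) * β t ω - lam * Bδ),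
      sq_nonneg (Real.exp (-(lam*t)) * β t ω)]
  -- joint measurability and product integrability
  have hjm := jointMeas μ β hmeas hpath' t
  have hsnd : AEStronglyMeasurable (fun p : ℝ × Ω => β t p.2) P := by
    refine (hmeas t).comp_quasiMeasurePreserving ⟨measurable_snd, ?_⟩
    rw [hP, Measure.map_snd_prod]
    intro A hA
    simp [Measure.smul_apply, hA]
  have hFaesm : AEStronglyMeasurable F P := by
    have hd := hsnd.sub hjm
    have h := ((hkcont.measurable.comp measurable_fst).aestronglyMeasurable).mul (hd.mul hd)
    refine h.congr (Filter.Eventually.of_forall fun p => ?_)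
    show k p.1 * ((β t p.2 - β p.1 p.2) * (β t p.2 - β p.1 p.2)) = F p
    simp only [hF, pow_two]
  have hFint : Integrable F P := by
    rw [hP, integrable_prod_iff (hP ▸ hFaesm)]
    constructor
    · filter_upwards [ae_restrict_mem measurableSet_Ioc] with s hs
      have hmem2 : MemLp (fun ω => β t ω - β s ω) 2 μ := (hL2 t ht).sub (hL2 s hs.1.le)
      exact (hmem2.integrable_sq).const_mul (k s)
    · have haesm2 : AEStronglyMeasurable (fun s => ∫ ω, ‖F (s, ω)‖ ∂μ)
          (volume.restrict (Set.Ioc 0 t)) := (hFaesm.norm).integral_prod_right'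
      refine Integrable.mono' (integrable_const (t ^ (2*H))) haesm2 ?_
      filter_upwards [ae_restrict_mem measurableSet_Ioc] with s hs
      have hcovs := cov_inc μ β H hH0 hL2 hcov hs.1.le hs.2
      have heq : ∫ ω, ‖F (s, ω)‖ ∂μ = k s * (t - s)^(2*H) := by
        rw [← hcovs, ← integral_const_mul]
        refine integral_congr_ae (Filter.Eventually.of_forall fun ω => ?_)
        show ‖k s * (β t ω - β s ω)^2‖ = k s * (β t ω - β s ω)^2
        rw [Real.norm_eq_abs, abs_of_nonneg (mul_nonneg (hkpos s).le (sq_nonneg _))]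
      rw [Real.norm_eq_abs, heq, abs_of_nonneg
        (mul_nonneg (hkpos s).le (Real.rpow_nonneg (by linarith [hs.2]) _))]
      calc k s * (t - s)^(2*H) ≤ 1 * (t - s)^(2*H) :=
            mul_le_mul_of_nonneg_right (hkle1 s ⟨hs.1.le, hs.2⟩)
              (Real.rpow_nonneg (by linarith [hs.2]) _)
        _ = (t - s)^(2*H) := one_mul _
        _ ≤ t^(2*H) := Real.rpow_le_rpow (by linarith [hs.2]) (by linarith [hs.1]) h2H0.le
  have hJint : Integrable (fun ω => ∫ s in Set.Ioc 0 t, F (s, ω)) μ := hFint.integral_prod_right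
  have hEβt : ∫ ω, (β t ω)^2 ∂μ = t ^ (2*H) := by
    have h := hcov t t ht ht
    rw [show |t - t| = (0:ℝ) by simp, Real.zero_rpow (by positivity : 2*H ≠ 0)] at h
    calc ∫ ω, (β t ω)^2 ∂μ = ∫ ω, β t ω * β t ω ∂μ := by
          refine integral_congr_ae (Filter.Eventually.of_forall fun ω => ?_)
          show (β t ω)^2 = β t ω * β t ω
          ring
      _ = t^(2*H) := by rw [h]; ring
  have hG : Integrable (fun ω => 2 * Real.exp (-(2*lam*t)) * (β t ω)^2 +
      2 * lam * ∫ s in Set.Ioc 0 t, F (s, ω)) μ :=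
    (((hL2 t ht).integrable_sq).const_mul _).add (hJint.const_mul _)
  have hKinner : ∫ ω, (∫ s in Set.Ioc 0 t, F (s, ω)) ∂μ
      = ∫ s in Set.Ioc 0 t, k s * (t-s)^(2*H) := by
    have hswap := integral_integral_swap (f := fun s ω => F (s, ω)) (μ := volume.restrict (Set.Ioc 0 t)) (ν := μ) hFint
    rw [← hswap]
    refine integral_congr_ae ?_
    filter_upwards [ae_restrict_mem measurableSet_Ioc] with s hs
    have hcovs := cov_inc μ β H hH0 hL2 hcov hs.1.le hs.2
    show ∫ ω, k s * (β t ω - β s ω)^2 ∂μ = k s * (t-s)^(2*H)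
    rw [integral_const_mul, hcovs]
  have h1 := integral_mono_of_nonneg
    (Filter.Eventually.of_forall fun ω => sq_nonneg (fracOU β lam t ω)) hG stepA
  rw [integral_add (((hL2 t ht).integrable_sq).const_mul _) (hJint.const_mul _),
    integral_const_mul, integral_const_mul, hEβt, hKinner] at h1
  -- bound 1 : exp(-(2 lam t)) * t^{2H} ≤ lam^{-2H}
  have hxexp : ∀ x : ℝ, 0 ≤ x → x^(2*H) ≤ Real.exp (2*x) := by
    intro x hx0
    rcases le_or_gt x 1 with h|h
    · exact (Real.rpow_le_one hx0 h h2H0.le).trans (Real.one_le_exp (by positivity))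
    · calc x^(2*H) ≤ x^(1:ℝ) := Real.rpow_le_rpow_of_exponent_le h.le (by linarith)
        _ = x := Real.rpow_one x
        _ ≤ Real.exp x := by nlinarith [Real.add_one_le_exp x]
        _ ≤ Real.exp (2*x) := Real.exp_le_exp.2 (by linarith)
  have hlam2H : (0:ℝ) < lam^(2*H) := Real.rpow_pos_of_pos hlam _
  have ht2H : t^(2*H) = lam^(-(2*H)) * (lam*t)^(2*H) := by
    rw [Real.mul_rpow hlam.le ht, Real.rpow_neg hlam.le]
    field_simp
  have hbound1 : Real.exp (-(2*lam*t)) * t^(2*H) ≤ lam ^ (-(2*H)) := by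
    calc Real.exp (-(2*lam*t)) * t^(2*H)
        = lam^(-(2*H)) * (Real.exp (-(2*lam*t)) * (lam*t)^(2*H)) := by rw [ht2H]; ring
      _ ≤ lam^(-(2*H)) * (Real.exp (-(2*lam*t)) * Real.exp (2*(lam*t))) := by
          refine mul_le_mul_of_nonneg_left (mul_le_mul_of_nonneg_left
            (hxexp _ (mul_nonneg hlam.le ht)) (Real.exp_pos _).le)
            (Real.rpow_nonneg hlam.le _)
      _ = lam^(-(2*H)) := by
          rw [← Real.exp_add, show -(2*lam*t) + 2*(lam*t) = 0 by ring, Real.exp_zero, mul_one]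
  -- bound 2 : Gamma bound
  have hbound2 : lam * (∫ s in Set.Ioc 0 t, k s * (t-s)^(2*H))
      ≤ Real.Gamma (2*H+1) * lam ^ (-(2*H)) := by
    have hKval : (∫ s in Set.Ioc 0 t, k s * (t-s)^(2*H))
        = ∫ u in (0:ℝ)..t, Real.exp (-(lam*u)) * u^(2*H) := by
      rw [← intervalIntegral.integral_of_le ht]
      have hcs := intervalIntegral.integral_comp_sub_left (a := (0:ℝ)) (b := t)
        (fun u => Real.exp (-(lam*u)) * u^(2*H)) t
      simp only [sub_zero, sub_self] at hcs
      rw [← hcs]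
    have hsub2 : (∫ u in (0:ℝ)..t, Real.exp (-(lam*u)) * u^(2*H))
        = lam^(-(2*H)) * (lam⁻¹ * ∫ v in (0:ℝ)..(lam*t), Real.exp (-v) * v^(2*H)) := by
      have hcongr : Set.EqOn (fun u => Real.exp (-(lam*u)) * u^(2*H))
          (fun u => lam^(-(2*H)) * (Real.exp (-(lam*u)) * (lam*u)^(2*H))) (Set.uIcc 0 t) := by
        intro u hu
        have hu0 : 0 ≤ u := by
          rw [Set.uIcc_of_le ht] at hu; exact hu.1
        simp only
        rw [Real.mul_rpow hlam.le hu0, Real.rpow_neg hlam.le]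
        field_simp
      rw [intervalIntegral.integral_congr hcongr, intervalIntegral.integral_const_mul]
      congr 1
      have hcm := intervalIntegral.integral_comp_mul_left (a := (0:ℝ)) (b := t)
        (fun v => Real.exp (-v) * v^(2*H)) (ne_of_gt hlam)
      rw [hcm]
      simp [smul_eq_mul]
    have hGam : (∫ v in (0:ℝ)..(lam*t), Real.exp (-v) * v^(2*H)) ≤ Real.Gamma (2*H+1) := by
      rw [intervalIntegral.integral_of_le (mul_nonneg hlam.le ht)]
      have hconv := Real.GammaIntegral_convergent (by linarith : (0:ℝ) < 2*H+1)
      have he : (fun x:ℝ => Real.exp (-x) * x ^ (2*H+1-1)) = (fun x:ℝ => Real.exp (-x) * x ^ (2*H)) := by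
        norm_num
      rw [he] at hconv
      have hnn : 0 ≤ᵐ[volume.restrict (Set.Ioi 0)] fun x:ℝ => Real.exp (-x) * x ^ (2*H) := by
        filter_upwards [ae_restrict_mem measurableSet_Ioi] with x hx
        exact mul_nonneg (Real.exp_pos _).le (Real.rpow_nonneg (le_of_lt hx) _)
      calc (∫ v in Set.Ioc 0 (lam*t), Real.exp (-v) * v^(2*H))
          ≤ ∫ v in Set.Ioi (0:ℝ), Real.exp (-v) * v^(2*H) :=
            setIntegral_mono_set hconv hnn
              (HasSubset.Subset.eventuallyLE Set.Ioc_subset_Ioi_self)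
        _ = Real.Gamma (2*H+1) := by
            rw [Real.Gamma_eq_integral (by linarith : (0:ℝ) < 2*H+1), ← he]
    have hIpos : (0:ℝ) ≤ ∫ v in (0:ℝ)..(lam*t), Real.exp (-v) * v^(2*H) := by
      rw [intervalIntegral.integral_of_le (mul_nonneg hlam.le ht)]
      refine setIntegral_nonneg measurableSet_Ioc (fun v hv => ?_)
      exact mul_nonneg (Real.exp_pos _).le (Real.rpow_nonneg hv.1.le _)
    rw [hKval, hsub2]
    have : lam * (lam^(-(2*H)) * (lam⁻¹ * ∫ v in (0:ℝ)..(lam*t), Real.exp (-v) * v^(2*H)))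
        = lam^(-(2*H)) * ∫ v in (0:ℝ)..(lam*t), Real.exp (-v) * v^(2*H) := by
      field_simp
    rw [this, mul_comm (Real.Gamma (2*H+1))]
    exact mul_le_mul_of_nonneg_left hGam (Real.rpow_nonneg hlam.le _)
  calc ∫ ω, (fracOU β lam t ω)^2 ∂μ
      ≤ 2 * Real.exp (-(2*lam*t)) * t^(2*H)
        + 2 * lam * ∫ s in Set.Ioc 0 t, k s * (t-s)^(2*H) := h1
    _ ≤ 2 * lam^(-(2*H)) + 2 * (Real.Gamma (2*H+1) * lam^(-(2*H))) := by
        have e1 : 2 * Real.exp (-(2*lam*t)) * t^(2*H)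
            = 2 * (Real.exp (-(2*lam*t)) * t^(2*H)) := by ring
        have e2 : 2 * lam * (∫ s in Set.Ioc 0 t, k s * (t-s)^(2*H))
            = 2 * (lam * ∫ s in Set.Ioc 0 t, k s * (t-s)^(2*H)) := by ring
        rw [e1, e2]
        linarith
    _ = (2 + 2 * Real.Gamma (2*H+1)) * lam ^ (-(2*H)) := by ring
end

section
/- Let H ∈ (0, 1/2) and let (β^H(t))_{t≥0} be a real-valued fractional Brownian motion with Hurst index H. Then there exists a constant C_H ∈ (0,∞) such that for every λ ∈ (0,∞), every Δt ∈ (0,1) and every n ∈ ℕ, the discrete-time fractional Ornstein–Uhlenbeck approximation 𝒵_n^{H,λ} = Σ_{j=0}^{n−1} e^{−λ(t_n−t_j)} (β^H(t_{j+1}) − β^H(t_j)), where t_j = jΔt, satisfies E[|𝒵_n^{H,λ}|²] ≤ C_H λ^{−2H}. -/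
open MeasureTheory

/-- The discrete-time approximation of the fractional Ornstein–Uhlenbeck process on the
uniform grid `t_j = j Δt`:
`𝒵_n^{H,λ} = Σ_{j=0}^{n-1} exp(-λ(t_n - t_j)) (β(t_{j+1}) - β(t_j))`. -/
noncomputable def fracOUdisc {Ω : Type*} (β : ℝ → Ω → ℝ) (lam Δt : ℝ) (n : ℕ) (ω : Ω) : ℝ :=
  ∑ j ∈ Finset.range n,
    Real.exp (-(lam * ((n : ℝ) * Δt - (j : ℝ) * Δt)))
      * (β (((j : ℝ) + 1) * Δt) ω - β ((j : ℝ) * Δt) ω)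

noncomputable def myb (lam Δt : ℝ) (n j : ℕ) : ℝ :=
  Real.exp (-(lam * ((n:ℝ) * Δt - (j:ℝ) * Δt)))

noncomputable def myd (lam Δt : ℝ) (n j : ℕ) : ℝ :=
  myb lam Δt n j - if j = 0 then 0 else myb lam Δt n (j-1)

private lemma sum_dd (b : ℕ → ℝ) (n : ℕ) :
    ∑ j ∈ Finset.range n, (b j - if j = 0 then 0 else b (j-1))
      = if n = 0 then 0 else b (n-1) := by
  induction n with
  | zero => simp
  | succ m ih =>
    rw [Finset.sum_range_succ, ih]
    cases m with
    | zero => simp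
    | succ k => simp

private lemma abel_id (b x : ℕ → ℝ) (n : ℕ) :
    ∑ j ∈ Finset.range n, b j * (x (j+1) - x j)
      = ∑ j ∈ Finset.range n, (b j - if j = 0 then 0 else b (j-1)) * (x n - x j) := by
  induction n with
  | zero => simp
  | succ m ih =>
    rw [Finset.sum_range_succ, ih, Finset.sum_range_succ]
    have h1 : ∑ j ∈ Finset.range m, (b j - if j = 0 then 0 else b (j-1)) * (x (m+1) - x j)
        = ∑ j ∈ Finset.range m, (b j - if j = 0 then 0 else b (j-1)) * (x m - x j)
          + (∑ j ∈ Finset.range m, (b j - if j = 0 then 0 else b (j-1))) * (x (m+1) - x m) := by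
      rw [Finset.sum_mul, ← Finset.sum_add_distrib]
      exact Finset.sum_congr rfl fun j _ => by ring
    rw [h1, sum_dd]
    cases m with
    | zero => simp
    | succ k => simp only [Nat.succ_ne_zero, if_false, Nat.add_sub_cancel]; ring

private lemma rpow_mul_exp_le' {H : ℝ} (hH0 : 0 ≤ H) (hH1 : H ≤ 1) {x : ℝ} (hx : 0 ≤ x) :
    x ^ H * Real.exp (-(x/2)) ≤ 2 := by
  rcases le_or_gt x 1 with h | h
  · have h1 : x ^ H ≤ 1 := Real.rpow_le_one hx h hH0
    have h2 : Real.exp (-(x/2)) ≤ 1 := Real.exp_le_one_iff.2 (by linarith)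
    nlinarith [Real.rpow_nonneg hx H, Real.exp_pos (-(x/2))]
  · have hx1 : x ^ H ≤ x := by
      calc x ^ H ≤ x ^ (1:ℝ) := Real.rpow_le_rpow_of_exponent_le h.le hH1
      _ = x := Real.rpow_one x
    have h2 : x ≤ 2 * Real.exp (x/2) := by
      nlinarith [Real.add_one_le_exp (x/2), Real.exp_pos (x/2)]
    have key : x * Real.exp (-(x/2)) ≤ 2 := by
      have h3 : x * Real.exp (-(x/2)) ≤ (2 * Real.exp (x/2)) * Real.exp (-(x/2)) :=
        mul_le_mul_of_nonneg_right h2 (Real.exp_pos _).le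
      rwa [mul_assoc, ← Real.exp_add, add_neg_cancel, Real.exp_zero, mul_one] at h3
    calc x ^ H * Real.exp (-(x/2)) ≤ x * Real.exp (-(x/2)) :=
          mul_le_mul_of_nonneg_right hx1 (Real.exp_pos _).le
    _ ≤ 2 := key

private lemma term_bound {H lam u : ℝ} (hH0 : 0 ≤ H) (hH1 : H ≤ 1) (hlam : 0 < lam)
    (hu : 0 ≤ u) : u ^ H * Real.exp (-(lam * u / 2)) ≤ 2 * lam ^ (-H) := by
  have hx : 0 ≤ lam * u := mul_nonneg hlam.le hu
  have h1 : u ^ H = lam ^ (-H) * (lam * u) ^ H := by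
    rw [Real.mul_rpow hlam.le hu, ← mul_assoc, Real.rpow_neg hlam.le, inv_mul_cancel₀, one_mul]
    exact (Real.rpow_pos_of_pos hlam H).ne'
  rw [h1, mul_assoc]
  have h2 : (lam * u) ^ H * Real.exp (-(lam * u / 2)) ≤ 2 := by
    have := rpow_mul_exp_le' hH0 hH1 hx
    simpa using this
  calc lam ^ (-H) * ((lam * u) ^ H * Real.exp (-(lam * u / 2)))
      ≤ lam ^ (-H) * 2 := mul_le_mul_of_nonneg_left h2 (Real.rpow_nonneg hlam.le _)
  _ = 2 * lam ^ (-H) := mul_comm _ _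

private lemma scalar_bound {H lam Δt : ℝ} (hH0 : 0 < H) (hH1 : H ≤ 1) (hlam : 0 < lam)
    (hΔt : 0 < Δt) (n : ℕ) :
    ∑ j ∈ Finset.range n, myd lam Δt n j * ((n:ℝ) * Δt - (j:ℝ) * Δt) ^ H
      ≤ 6 * lam ^ (-H) := by
  have hlpos : (0:ℝ) < lam ^ (-H) := Real.rpow_pos_of_pos hlam _
  cases n with
  | zero => simp; positivity
  | succ m =>
    rw [Finset.sum_range_succ']
    set y : ℝ := lam * Δt with hy
    have hypos : 0 < y := mul_pos hlam hΔt
    set r : ℝ := Real.exp (-(y/2)) with hr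
    have hr0 : 0 < r := Real.exp_pos _
    have hr1 : r < 1 := by
      rw [hr]; exact Real.exp_lt_one_iff.2 (by linarith)
    have h10 : 0 < 1 - r := by linarith
    have h0 : myd lam Δt (m+1) 0 * (((m+1:ℕ):ℝ) * Δt - ((0:ℕ):ℝ) * Δt) ^ H ≤ 2 * lam ^ (-H) := by
      have hu : (0:ℝ) ≤ ((m+1:ℕ):ℝ) * Δt := by positivity
      have hd0 : myd lam Δt (m+1) 0 = Real.exp (-(lam * (((m+1:ℕ):ℝ) * Δt))) := by
        simp [myd, myb]
      rw [hd0]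
      have hmono : Real.exp (-(lam * (((m+1:ℕ):ℝ) * Δt)))
          ≤ Real.exp (-(lam * (((m+1:ℕ):ℝ) * Δt) / 2)) := by
        apply Real.exp_le_exp.2
        have : 0 ≤ lam * (((m+1:ℕ):ℝ) * Δt) := mul_nonneg hlam.le hu
        linarith
      calc Real.exp (-(lam * (((m+1:ℕ):ℝ) * Δt))) * (((m+1:ℕ):ℝ) * Δt - ((0:ℕ):ℝ) * Δt) ^ H
          ≤ Real.exp (-(lam * (((m+1:ℕ):ℝ) * Δt) / 2)) * (((m+1:ℕ):ℝ) * Δt) ^ H := by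
            simp only [Nat.cast_zero, zero_mul, sub_zero]
            exact mul_le_mul_of_nonneg_right hmono (Real.rpow_nonneg hu H)
      _ = (((m+1:ℕ):ℝ) * Δt) ^ H * Real.exp (-(lam * (((m+1:ℕ):ℝ) * Δt) / 2)) := mul_comm _ _
      _ ≤ 2 * lam ^ (-H) := term_bound hH0.le hH1 hlam hu
    have hterm : ∀ i ∈ Finset.range m,
        myd lam Δt (m+1) (i+1) * (((m+1:ℕ):ℝ) * Δt - ((i+1:ℕ):ℝ) * Δt) ^ H
          ≤ 2 * lam ^ (-H) * (y * r ^ (m - i)) := by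
      intro i hi
      have him : i < m := Finset.mem_range.1 hi
      set k : ℕ := m - i with hk
      have hcast : ((m+1:ℕ):ℝ) * Δt - ((i+1:ℕ):ℝ) * Δt = (k:ℝ) * Δt := by
        have hkc : ((k:ℕ):ℝ) = (m:ℝ) - (i:ℝ) := by
          rw [hk, Nat.cast_sub him.le]
        rw [hkc]; push_cast; ring
      have hu : (0:ℝ) ≤ (k:ℝ) * Δt := by positivity
      have e1 : -(lam * (((m+1:ℕ):ℝ) * Δt - ((i+1:ℕ):ℝ) * Δt)) = -(lam * ((k:ℝ) * Δt)) := by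
        rw [hcast]
      have e2 : -(lam * (((m+1:ℕ):ℝ) * Δt - ((i:ℕ):ℝ) * Δt))
          = -(lam * ((k:ℝ) * Δt)) + -y := by
        have h2 : ((m+1:ℕ):ℝ) * Δt - ((i:ℕ):ℝ) * Δt = (k:ℝ) * Δt + Δt := by
          rw [← hcast]; push_cast; ring
        rw [h2, hy]; ring
      have hd1 : myd lam Δt (m+1) (i+1)
          = Real.exp (-(lam * ((k:ℝ) * Δt))) * (1 - Real.exp (-y)) := by
        simp only [myd, myb, Nat.succ_ne_zero, if_false, Nat.add_sub_cancel, e1, e2]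
        rw [Real.exp_add]; ring
      have hd : myd lam Δt (m+1) (i+1) ≤ Real.exp (-(lam * ((k:ℝ) * Δt))) * y := by
        rw [hd1]
        apply mul_le_mul_of_nonneg_left _ (Real.exp_pos _).le
        have := Real.add_one_le_exp (-y)
        linarith
      have hsplit : Real.exp (-(lam * ((k:ℝ) * Δt)))
          = Real.exp (-(lam * ((k:ℝ) * Δt) / 2)) * r ^ k := by
        rw [hr, ← Real.exp_nat_mul, ← Real.exp_add]
        congr 1
        rw [hy]; ring
      have hnonneg : (0:ℝ) ≤ ((k:ℝ) * Δt) ^ H := Real.rpow_nonneg hu H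
      calc myd lam Δt (m+1) (i+1) * (((m+1:ℕ):ℝ) * Δt - ((i+1:ℕ):ℝ) * Δt) ^ H
          = myd lam Δt (m+1) (i+1) * ((k:ℝ) * Δt) ^ H := by rw [hcast]
      _ ≤ (Real.exp (-(lam * ((k:ℝ) * Δt))) * y) * ((k:ℝ) * Δt) ^ H :=
            mul_le_mul_of_nonneg_right hd hnonneg
      _ = (((k:ℝ) * Δt) ^ H * Real.exp (-(lam * ((k:ℝ) * Δt) / 2))) * (y * r ^ k) := by
            rw [hsplit]; ring
      _ ≤ (2 * lam ^ (-H)) * (y * r ^ k) := by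
            apply mul_le_mul_of_nonneg_right (term_bound hH0.le hH1 hlam hu)
            positivity
    have hgeom : y * ∑ i ∈ Finset.range m, r ^ (m - i) ≤ 2 := by
      have hre : ∑ i ∈ Finset.range m, r ^ (m - i) = ∑ i ∈ Finset.range m, r ^ (i+1) :=
        calc ∑ i ∈ Finset.range m, r ^ (m - i)
            = ∑ i ∈ Finset.range m, (fun j => r ^ (j+1)) (m - 1 - i) := by
              refine Finset.sum_congr rfl fun i hi => ?_
              have := Finset.mem_range.1 hi
              simp only
              congr 1
              omega
        _ = ∑ i ∈ Finset.range m, r ^ (i+1) := by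
              simpa using Finset.sum_range_reflect (fun j => r ^ (j+1)) m
      have hgs : ∑ i ∈ Finset.range m, r ^ i ≤ 1 / (1 - r) := by
        rw [geom_sum_eq hr1.ne m]
        have heq : (r ^ m - 1) / (r - 1) = (1 - r ^ m) / (1 - r) := by
          rw [← neg_div_neg_eq]; ring_nf
        rw [heq]
        gcongr
        nlinarith [pow_nonneg hr0.le m]
      have hsum_le : ∑ i ∈ Finset.range m, r ^ (m - i) ≤ r * (1 / (1 - r)) := by
        rw [hre]
        have : ∑ i ∈ Finset.range m, r ^ (i+1) = r * ∑ i ∈ Finset.range m, r ^ i := by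
          rw [Finset.mul_sum]
          exact Finset.sum_congr rfl fun i _ => by ring
        rw [this]
        exact mul_le_mul_of_nonneg_left hgs hr0.le
      have hkey : y * (r * (1 / (1 - r))) ≤ 2 := by
        have hrinv : r * Real.exp (y/2) = 1 := by
          rw [hr, ← Real.exp_add]; simp
        have hle := Real.add_one_le_exp (y/2)
        have hyr : y * r ≤ 2 * (1 - r) := by
          nlinarith [mul_le_mul_of_nonneg_left hle hr0.le]
        calc y * (r * (1 / (1 - r))) = (y * r) / (1 - r) := by ring
        _ ≤ (2 * (1 - r)) / (1 - r) := by gcongr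
        _ = 2 := by field_simp
      calc y * ∑ i ∈ Finset.range m, r ^ (m - i) ≤ y * (r * (1 / (1 - r))) :=
            mul_le_mul_of_nonneg_left hsum_le hypos.le
      _ ≤ 2 := hkey
    have hsum2 : ∑ i ∈ Finset.range m,
        myd lam Δt (m+1) (i+1) * (((m+1:ℕ):ℝ) * Δt - ((i+1:ℕ):ℝ) * Δt) ^ H
          ≤ 4 * lam ^ (-H) := by
      calc ∑ i ∈ Finset.range m,
          myd lam Δt (m+1) (i+1) * (((m+1:ℕ):ℝ) * Δt - ((i+1:ℕ):ℝ) * Δt) ^ H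
          ≤ ∑ i ∈ Finset.range m, 2 * lam ^ (-H) * (y * r ^ (m - i)) :=
            Finset.sum_le_sum hterm
      _ = 2 * lam ^ (-H) * (y * ∑ i ∈ Finset.range m, r ^ (m - i)) := by
            rw [Finset.mul_sum, Finset.mul_sum]
      _ ≤ 2 * lam ^ (-H) * 2 := mul_le_mul_of_nonneg_left hgeom (by positivity)
      _ = 4 * lam ^ (-H) := by ring
    have := add_le_add hsum2 h0
    push_cast at this ⊢
    linarith

private lemma Lp_coeFn_sum {α : Type*} [MeasurableSpace α] {μ : Measure α} {ι : Type*}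
    (s : Finset ι) (f : ι → Lp ℝ 2 μ) :
    ⇑(∑ i ∈ s, f i) =ᵐ[μ] fun ω => ∑ i ∈ s, f i ω := by
  classical
  induction s using Finset.induction_on with
  | empty =>
    simp only [Finset.sum_empty]
    filter_upwards [Lp.coeFn_zero (E := ℝ) (p := 2) (μ := μ)] with ω h
    simpa using h
  | @insert a s' hnot ih =>
    rw [Finset.sum_insert hnot]
    filter_upwards [Lp.coeFn_add (f a) (∑ i ∈ s', f i), ih] with ω h1 h2
    simp only [Finset.sum_insert hnot, h1, Pi.add_apply, h2]

private lemma norm_sq_eq_integral_sq {α : Type*} [MeasurableSpace α] {μ : Measure α}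
    (v : Lp ℝ 2 μ) : ‖v‖ ^ 2 = ∫ ω, (v ω) ^ 2 ∂μ := by
  rw [← real_inner_self_eq_norm_sq, L2.inner_def]
  refine integral_congr_ae (Filter.Eventually.of_forall fun ω => ?_)
  show (inner ℝ (v ω) (v ω) : ℝ) = _
  rw [real_inner_self_eq_norm_sq, Real.norm_eq_abs, sq_abs]

private lemma Lp_inner_eq {α : Type*} [MeasurableSpace α] {μ : Measure α}
    (f g : Lp ℝ 2 μ) : (inner ℝ f g : ℝ) = ∫ ω, f ω * g ω ∂μ := by
  rw [L2.inner_def]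
  refine integral_congr_ae (Filter.Eventually.of_forall fun ω => ?_)
  simp [RCLike.inner_apply, mul_comm]

/-- Moment bound for the discrete-time fractional Ornstein–Uhlenbeck approximation, case
`H ∈ (0,1/2)`: there is `C_H ∈ (0,∞)` such that `E[|𝒵_n^{H,λ}|²] ≤ C_H λ^{-2H}` for all
`λ > 0`, `Δt ∈ (0,1)` and `n ∈ ℕ`. -/
theorem stmt13
    {Ω : Type*} [MeasurableSpace Ω] (μ : Measure Ω) [IsProbabilityMeasure μ]
    (H : ℝ) (hH : H ∈ Set.Ioo (0 : ℝ) (1/2))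
    (β : ℝ → Ω → ℝ)
    (hmeas : ∀ t : ℝ, AEStronglyMeasurable (β t) μ)
    (hpath : ∀ᵐ ω ∂μ, ContinuousOn (fun t => β t ω) (Set.Ici 0) ∧ β 0 ω = 0)
    (hL2 : ∀ t : ℝ, 0 ≤ t → MemLp (β t) 2 μ)
    (hmean : ∀ t : ℝ, 0 ≤ t → ∫ ω, β t ω ∂μ = 0)
    (hcov : ∀ t s : ℝ, 0 ≤ t → 0 ≤ s →
      ∫ ω, β t ω * β s ω ∂μ = (t ^ (2*H) + s ^ (2*H) - |t - s| ^ (2*H)) / 2) :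
    ∃ C : ℝ, 0 < C ∧ ∀ lam : ℝ, 0 < lam → ∀ Δt ∈ Set.Ioo (0:ℝ) 1, ∀ n : ℕ,
      ∫ ω, (fracOUdisc β lam Δt n ω) ^ 2 ∂μ ≤ C * lam ^ (-(2*H)) := by
  obtain ⟨hH0, hH12⟩ := hH
  have h2H : (0:ℝ) < 2 * H := by linarith
  refine ⟨36, by norm_num, ?_⟩
  intro lam hlam Δt hΔt n
  obtain ⟨hΔ0, hΔ1⟩ := hΔt
  have hT : ∀ j : ℕ, (0:ℝ) ≤ (j:ℝ) * Δt := fun j => by positivity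
  set Bj : ℕ → Lp ℝ 2 μ := fun j => ((hL2 ((j:ℝ) * Δt) (hT j)).toLp (β ((j:ℝ) * Δt))) with hBj
  have hIP : ∀ j l : ℕ, (inner ℝ (Bj j) (Bj l) : ℝ)
      = (((j:ℝ)*Δt) ^ (2*H) + ((l:ℝ)*Δt) ^ (2*H) - |(j:ℝ)*Δt - (l:ℝ)*Δt| ^ (2*H)) / 2 := by
    intro j l
    rw [Lp_inner_eq]
    have hae : (fun ω => (Bj j) ω * (Bj l) ω)
        =ᵐ[μ] fun ω => β ((j:ℝ)*Δt) ω * β ((l:ℝ)*Δt) ω := by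
      filter_upwards [MemLp.coeFn_toLp (hL2 ((j:ℝ) * Δt) (hT j)),
        MemLp.coeFn_toLp (hL2 ((l:ℝ) * Δt) (hT l))] with ω e1 e2
      simp only [hBj, e1, e2]
    rw [integral_congr_ae hae]
    exact hcov _ _ (hT j) (hT l)
  have hsq : ∀ j : ℕ, ‖Bj j‖ ^ 2 = ((j:ℝ)*Δt) ^ (2*H) := by
    intro j
    rw [← real_inner_self_eq_norm_sq, hIP j j]
    rw [sub_self, abs_zero, Real.zero_rpow h2H.ne']
    ring
  have hFnorm : ∀ j : ℕ, j ≤ n → ‖Bj n - Bj j‖ = ((n:ℝ)*Δt - (j:ℝ)*Δt) ^ H := by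
    intro j hj
    have hts : (j:ℝ)*Δt ≤ (n:ℝ)*Δt := by
      have : (j:ℝ) ≤ (n:ℝ) := Nat.cast_le.2 hj
      nlinarith
    have hsub : (0:ℝ) ≤ (n:ℝ)*Δt - (j:ℝ)*Δt := sub_nonneg.2 hts
    have hsq2 : ‖Bj n - Bj j‖ ^ 2 = ((n:ℝ)*Δt - (j:ℝ)*Δt) ^ (2*H) := by
      rw [norm_sub_sq_real, hsq n, hsq j, hIP n j, abs_of_nonneg hsub]
      ring
    have h1 : ((n:ℝ)*Δt - (j:ℝ)*Δt) ^ (2*H) = (((n:ℝ)*Δt - (j:ℝ)*Δt) ^ H) ^ 2 := by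
      rw [← Real.rpow_natCast (((n:ℝ)*Δt - (j:ℝ)*Δt) ^ H) 2, ← Real.rpow_mul hsub]
      norm_num [mul_comm]
    rw [← Real.sqrt_sq (norm_nonneg (Bj n - Bj j)), hsq2, h1,
      Real.sqrt_sq (Real.rpow_nonneg hsub H)]
  set G : Lp ℝ 2 μ := ∑ j ∈ Finset.range n, myd lam Δt n j • (Bj n - Bj j) with hGdef
  have hGae : ⇑G =ᵐ[μ]
      fun ω => ∑ j ∈ Finset.range n,
        myd lam Δt n j * (β ((n:ℝ)*Δt) ω - β ((j:ℝ)*Δt) ω) := by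
    refine (Lp_coeFn_sum _ _).trans ?_
    have h1 : ∀ j : ℕ, ∀ᵐ ω ∂μ, (myd lam Δt n j • (Bj n - Bj j)) ω
        = myd lam Δt n j * (β ((n:ℝ)*Δt) ω - β ((j:ℝ)*Δt) ω) := by
      intro j
      filter_upwards [Lp.coeFn_smul (myd lam Δt n j) (Bj n - Bj j),
        Lp.coeFn_sub (Bj n) (Bj j),
        MemLp.coeFn_toLp (hL2 ((n:ℝ) * Δt) (hT n)),
        MemLp.coeFn_toLp (hL2 ((j:ℝ) * Δt) (hT j))] with ω e1 e2 e3 e4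
      rw [e1]
      simp only [Pi.smul_apply, smul_eq_mul]
      rw [e2]
      simp only [Pi.sub_apply, hBj, e3, e4]
    have h2 := MeasureTheory.ae_all_iff.2 h1
    filter_upwards [h2] with ω hω
    exact Finset.sum_congr rfl fun j _ => hω j
  have hint : ∫ ω, (fracOUdisc β lam Δt n ω) ^ 2 ∂μ = ‖G‖ ^ 2 := by
    rw [norm_sq_eq_integral_sq G]
    refine integral_congr_ae ?_
    filter_upwards [hGae] with ω hω
    rw [hω]
    congr 1
    have h := abel_id (fun j => myb lam Δt n j) (fun j => β ((j:ℝ)*Δt) ω) n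
    calc fracOUdisc β lam Δt n ω
        = ∑ j ∈ Finset.range n, myb lam Δt n j
            * (β (((j+1:ℕ):ℝ)*Δt) ω - β ((j:ℝ)*Δt) ω) := by
          rw [fracOUdisc]
          refine Finset.sum_congr rfl fun j _ => ?_
          simp only [myb]
          push_cast
          ring_nf
    _ = ∑ j ∈ Finset.range n, myd lam Δt n j * (β ((n:ℝ)*Δt) ω - β ((j:ℝ)*Δt) ω) := by
          rw [h]
          exact Finset.sum_congr rfl fun j _ => by simp only [myd, myb]
  have hd_nonneg : ∀ j : ℕ, 0 ≤ myd lam Δt n j := by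
    intro j
    cases j with
    | zero =>
      have h0 : myd lam Δt n 0 = Real.exp (-(lam * ((n:ℝ) * Δt - ((0:ℕ):ℝ) * Δt))) := by
        simp [myd, myb]
      rw [h0]
      exact (Real.exp_pos _).le
    | succ i =>
      simp only [myd, myb, Nat.succ_ne_zero, if_false, Nat.add_sub_cancel, sub_nonneg]
      apply Real.exp_le_exp.2
      push_cast
      nlinarith [mul_nonneg hlam.le hΔ0.le]
  have hnormle : ‖G‖ ≤ ∑ j ∈ Finset.range n, myd lam Δt n j * ((n:ℝ)*Δt - (j:ℝ)*Δt) ^ H := by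
    refine le_of_le_of_eq (norm_sum_le _ _) (Finset.sum_congr rfl fun j hj => ?_)
    rw [norm_smul, Real.norm_eq_abs, abs_of_nonneg (hd_nonneg j),
      hFnorm j (Finset.mem_range.1 hj).le]
  have hS : ∑ j ∈ Finset.range n, myd lam Δt n j * ((n:ℝ)*Δt - (j:ℝ)*Δt) ^ H
      ≤ 6 * lam ^ (-H) := scalar_bound hH0 (by linarith) hlam hΔ0 n
  have hGle : ‖G‖ ≤ 6 * lam ^ (-H) := hnormle.trans hS
  have hfin : ‖G‖ ^ 2 ≤ (6 * lam ^ (-H)) ^ 2 := pow_le_pow_left₀ (norm_nonneg G) hGle 2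
  rw [hint]
  refine hfin.trans (le_of_eq ?_)
  rw [mul_pow]
  have hpow : (lam ^ (-H)) ^ 2 = lam ^ (-(2*H)) := by
    rw [← Real.rpow_natCast (lam ^ (-H)) 2, ← Real.rpow_mul hlam.le]
    congr 1
    push_cast
    ring
  rw [hpow]
  norm_num
end

section
/- Let H ∈ (0, 1/2). Then there exists a constant C_H ∈ (0,∞) such that for every λ ∈ (0,∞) and all 0 ≤ t₁ ≤ t₂ one has ∫_{λt₁}^{λt₂} r^{2H−1} e^{−2(λt₂ − r)} dr ≤ C_H (min(1, λ(t₂ − t₁)))^{2H}. -/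
open MeasureTheory intervalIntegral Real

private lemma stmt16_sub {x y p : ℝ} (hx : 0 ≤ x) (hxy : x ≤ y) (hp0 : 0 ≤ p) (hp1 : p ≤ 1) :
    y ^ p - x ^ p ≤ (y - x) ^ p := by
  have hd : 0 ≤ y - x := sub_nonneg.2 hxy
  have h := NNReal.rpow_add_le_add_rpow x.toNNReal (y - x).toNNReal hp0 hp1
  rw [← Real.toNNReal_add hx hd] at h
  have h2 : (y : ℝ) ^ p ≤ x ^ p + (y - x) ^ p := by
    have := NNReal.coe_le_coe.2 h
    simpa [add_sub_cancel, NNReal.coe_rpow, Real.coe_toNNReal _ hx,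
      Real.coe_toNNReal _ hd, Real.coe_toNNReal _ (hx.trans hxy)] using this
  linarith

private lemma stmt16_int (H : ℝ) (hH : 0 < H) (c a b : ℝ) :
    IntervalIntegrable (fun r => r ^ (2*H - 1) * Real.exp (-(2 * (c - r)))) volume a b := by
  apply (intervalIntegrable_rpow' (by linarith)).mul_continuousOn
  exact (by continuity : Continuous fun r : ℝ => Real.exp (-(2 * (c - r)))).continuousOn

private lemma stmt16_key (H : ℝ) (hH : H ∈ Set.Ioo (0 : ℝ) (1/2)) (a b : ℝ)
    (ha : 0 ≤ a) (hab : a ≤ b) :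
    (∫ r in a..b, r ^ (2*H - 1) * Real.exp (-(2 * (b - r))))
      ≤ (1/(2*H) + 1/2) * (min 1 (b - a)) ^ (2*H) := by
  obtain ⟨hH0, hH1⟩ := hH
  have h2H : (0:ℝ) < 2*H := by linarith
  have h2H1 : 2*H ≤ 1 := by linarith
  by_cases hmin : b - a ≤ 1
  · rw [min_eq_right hmin]
    have step1 : (∫ r in a..b, r ^ (2*H - 1) * Real.exp (-(2 * (b - r))))
        ≤ ∫ r in a..b, r ^ (2*H - 1) := by
      apply intervalIntegral.integral_mono_on hab (stmt16_int H hH0 b a b)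
        (intervalIntegrable_rpow' (by linarith))
      intro x hx
      have hx0 : 0 ≤ x := ha.trans hx.1
      calc x ^ (2*H - 1) * Real.exp (-(2 * (b - x)))
          ≤ x ^ (2*H - 1) * 1 := by
            apply mul_le_mul_of_nonneg_left _ (Real.rpow_nonneg hx0 _)
            rw [Real.exp_le_one_iff]
            nlinarith [hx.2]
        _ = x ^ (2*H - 1) := mul_one _
    have step2 : (∫ r in a..b, r ^ (2*H - 1)) = (b ^ (2*H) - a ^ (2*H)) / (2*H) := by
      rw [integral_rpow (Or.inl (by linarith))]
      norm_num
    have hsub := stmt16_sub ha hab h2H.le h2H1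
    have hnn : 0 ≤ (b - a) ^ (2*H) := Real.rpow_nonneg (by linarith) _
    calc (∫ r in a..b, r ^ (2*H - 1) * Real.exp (-(2 * (b - r))))
        ≤ (b ^ (2*H) - a ^ (2*H)) / (2*H) := step1.trans step2.le
      _ ≤ (b - a) ^ (2*H) / (2*H) := by gcongr
      _ ≤ (1/(2*H) + 1/2) * (b - a) ^ (2*H) := by
          rw [div_eq_mul_inv, mul_comm]
          apply mul_le_mul_of_nonneg_right _ hnn
          rw [one_div]
          linarith
  · push_neg at hmin
    rw [min_eq_left hmin.le, Real.one_rpow, mul_one]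
    have hb1 : (1:ℝ) ≤ b := by linarith
    have hnonneg : 0 ≤ᵐ[volume.restrict (Set.Ioc 0 b)]
        fun r => r ^ (2*H - 1) * Real.exp (-(2 * (b - r))) := by
      refine (ae_restrict_iff' measurableSet_Ioc).2 (Filter.Eventually.of_forall ?_)
      intro x hx
      exact mul_nonneg (Real.rpow_nonneg hx.1.le _) (Real.exp_nonneg _)
    have step0 : (∫ r in a..b, r ^ (2*H - 1) * Real.exp (-(2 * (b - r))))
        ≤ ∫ r in (0:ℝ)..b, r ^ (2*H - 1) * Real.exp (-(2 * (b - r))) :=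
      intervalIntegral.integral_mono_interval ha hab le_rfl hnonneg (stmt16_int H hH0 b 0 b)
    have hsplit : (∫ r in (0:ℝ)..b, r ^ (2*H - 1) * Real.exp (-(2 * (b - r))))
        = (∫ r in (0:ℝ)..1, r ^ (2*H - 1) * Real.exp (-(2 * (b - r))))
          + ∫ r in (1:ℝ)..b, r ^ (2*H - 1) * Real.exp (-(2 * (b - r))) :=
      (intervalIntegral.integral_add_adjacent_intervals (stmt16_int H hH0 b 0 1)
        (stmt16_int H hH0 b 1 b)).symm
    have part1 : (∫ r in (0:ℝ)..1, r ^ (2*H - 1) * Real.exp (-(2 * (b - r)))) ≤ 1/(2*H) := by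
      have h1 : (∫ r in (0:ℝ)..1, r ^ (2*H - 1) * Real.exp (-(2 * (b - r))))
          ≤ ∫ r in (0:ℝ)..1, r ^ (2*H - 1) := by
        apply intervalIntegral.integral_mono_on zero_le_one (stmt16_int H hH0 b 0 1)
          (intervalIntegrable_rpow' (by linarith))
        intro x hx
        calc x ^ (2*H - 1) * Real.exp (-(2 * (b - x)))
            ≤ x ^ (2*H - 1) * 1 := by
              apply mul_le_mul_of_nonneg_left _ (Real.rpow_nonneg hx.1 _)
              rw [Real.exp_le_one_iff]
              nlinarith [hx.2]
          _ = x ^ (2*H - 1) := mul_one _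
      have h2 : (∫ r in (0:ℝ)..1, r ^ (2*H - 1)) = 1/(2*H) := by
        rw [integral_rpow (Or.inl (by linarith))]
        have he : 2*H - 1 + 1 = 2*H := by ring
        rw [he, Real.one_rpow, Real.zero_rpow (ne_of_gt h2H)]
        norm_num
      linarith
    have part2 : (∫ r in (1:ℝ)..b, r ^ (2*H - 1) * Real.exp (-(2 * (b - r)))) ≤ 1/2 := by
      have h1 : (∫ r in (1:ℝ)..b, r ^ (2*H - 1) * Real.exp (-(2 * (b - r))))
          ≤ ∫ r in (1:ℝ)..b, Real.exp (-(2 * (b - r))) := by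
        apply intervalIntegral.integral_mono_on hb1 (stmt16_int H hH0 b 1 b)
          ((by continuity : Continuous fun r : ℝ => Real.exp (-(2 * (b - r)))).intervalIntegrable _ _)
        intro x hx
        calc x ^ (2*H - 1) * Real.exp (-(2 * (b - x)))
            ≤ 1 * Real.exp (-(2 * (b - x))) := by
              apply mul_le_mul_of_nonneg_right _ (Real.exp_nonneg _)
              exact Real.rpow_le_one_of_one_le_of_nonpos hx.1 (by linarith)
          _ = Real.exp (-(2 * (b - x))) := one_mul _
      have hderiv : ∀ r ∈ Set.uIcc (1:ℝ) b,
          HasDerivAt (fun r => Real.exp (-(2 * (b - r))) / 2) (Real.exp (-(2 * (b - r)))) r := by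
        intro r _
        have hi : HasDerivAt (fun r : ℝ => -(2 * (b - r))) 2 r := by
          have := ((hasDerivAt_id r).const_sub b).const_mul (2:ℝ)
          simpa [Pi.neg_def] using this.neg
        have := hi.exp.div_const 2
        simpa [mul_div_assoc] using this
      have h2 : (∫ r in (1:ℝ)..b, Real.exp (-(2 * (b - r))))
          = Real.exp (-(2 * (b - b))) / 2 - Real.exp (-(2 * (b - 1))) / 2 :=
        intervalIntegral.integral_eq_sub_of_hasDerivAt hderiv
          ((by continuity : Continuous fun r : ℝ => Real.exp (-(2 * (b - r)))).intervalIntegrable _ _)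
      have h3 : Real.exp (-(2 * (b - b))) = 1 := by simp
      have h4 : 0 < Real.exp (-(2 * (b - 1))) := Real.exp_pos _
      rw [h2, h3] at h1
      linarith
    linarith [step0, hsplit ▸ step0]

/-- For `H ∈ (0,1/2)` there exists `C_H ∈ (0,∞)` such that for all `λ > 0` and
`0 ≤ t₁ ≤ t₂`, `∫_{λt₁}^{λt₂} r^{2H-1} e^{-2(λt₂ - r)} dr ≤ C_H (min(1, λ(t₂-t₁)))^{2H}`. -/
theorem stmt16 (H : ℝ) (hH : H ∈ Set.Ioo (0 : ℝ) (1/2)) :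
    ∃ C : ℝ, 0 < C ∧ ∀ lam : ℝ, 0 < lam → ∀ t₁ t₂ : ℝ, 0 ≤ t₁ → t₁ ≤ t₂ →
      (∫ r in (lam * t₁)..(lam * t₂), r ^ (2*H - 1) * Real.exp (-(2 * (lam * t₂ - r))))
        ≤ C * (min 1 (lam * (t₂ - t₁))) ^ (2*H) := by
  refine ⟨1/(2*H) + 1/2, by have := hH.1; positivity, ?_⟩
  intro lam hlam t₁ t₂ ht₁ ht
  have hkey := stmt16_key H hH (lam * t₁) (lam * t₂)
    (mul_nonneg hlam.le ht₁) (mul_le_mul_of_nonneg_left ht hlam.le)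
  rwa [← mul_sub] at hkey
end

section
/- Let H ∈ (0, 1/2). Then there exists a constant C_H ∈ (0,∞) such that for every λ ∈ (0,∞) and every t ≥ 0 one has ∫₀^t ( ∫_s^t (e^{−λ(t−τ)} − e^{−λ(t−s)}) (τ − s)^{H−3/2} dτ )² ds ≤ C_H λ^{−2H}. -/
open MeasureTheory Set ENNReal

/-- Auxiliary: the function `u ↦ (1 - e^{-λu}) u^{H-3/2}`. -/
noncomputable def psif (H l u : ℝ) : ℝ := (1 - Real.exp (-(l * u))) * u ^ (H - 3/2)

lemma psif_meas (H l : ℝ) : Measurable (psif H l) :=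
  (measurable_const.sub ((measurable_id.const_mul l).neg.exp)).mul
    (measurable_id.pow_const _)

lemma psif_nonneg {H l u : ℝ} (hl : 0 ≤ l) (hu : 0 ≤ u) : 0 ≤ psif H l u := by
  unfold psif
  have h1 : Real.exp (-(l * u)) ≤ 1 := Real.exp_le_one_iff.mpr (by nlinarith)
  exact mul_nonneg (by linarith) (Real.rpow_nonneg hu _)

lemma one_sub_exp_le (x : ℝ) : 1 - Real.exp (-x) ≤ x := by
  have := Real.add_one_le_exp (-x); linarith

lemma one_sub_exp_nonneg {x : ℝ} (hx : 0 ≤ x) : 0 ≤ 1 - Real.exp (-x) := by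
  have : Real.exp (-x) ≤ 1 := Real.exp_le_one_iff.mpr (by linarith)
  linarith

lemma glMeas (H l : ℝ) :
    Measurable fun v : ℝ => (1 - Real.exp (-(l * v))) ^ 2 * v ^ (2 * H - 3) :=
  ((measurable_const.sub ((measurable_id.const_mul l).neg.exp)).pow_const 2).mul
    (measurable_id.pow_const _)

/-- Integrability of `(1 - e^{-λv})² v^{2H-3}` on `(0,∞)` for `0 < H < 1/2`. -/
lemma glInt {H : ℝ} (hH1 : 0 < H) (hH2 : H < 1/2) {l : ℝ} (hl : 0 < l) :
    IntegrableOn (fun v : ℝ => (1 - Real.exp (-(l * v))) ^ 2 * v ^ (2 * H - 3))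
      (Set.Ioi 0) := by
  have hmeas := glMeas H l
  rw [← Set.Ioc_union_Ioi_eq_Ioi (zero_le_one)]
  apply IntegrableOn.union
  · have hbound : IntegrableOn (fun v : ℝ => l ^ 2 * v ^ (2 * H - 1)) (Set.Ioc 0 1) :=
      ((intervalIntegral.intervalIntegrable_rpow' (by linarith)).1.const_mul _)
    apply Integrable.mono hbound hmeas.aestronglyMeasurable.restrict
    filter_upwards [ae_restrict_mem measurableSet_Ioc] with v hv
    have hv0 : 0 < v := hv.1
    have hf0 : 0 ≤ (1 - Real.exp (-(l * v))) ^ 2 * v ^ (2 * H - 3) :=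
      mul_nonneg (sq_nonneg _) (Real.rpow_nonneg hv0.le _)
    have hg0 : (0:ℝ) ≤ l ^ 2 * v ^ (2 * H - 1) := by positivity
    rw [Real.norm_eq_abs, Real.norm_eq_abs, abs_of_nonneg hf0, abs_of_nonneg hg0]
    have h1 : (1 - Real.exp (-(l * v))) ^ 2 ≤ (l * v) ^ 2 :=
      pow_le_pow_left₀ (one_sub_exp_nonneg (by positivity)) (one_sub_exp_le _) 2
    have h2 : (v:ℝ) ^ (2:ℕ) * v ^ (2 * H - 3) = v ^ (2 * H - 1) := by
      rw [← Real.rpow_natCast v 2, ← Real.rpow_add hv0]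
      norm_num
      ring_nf
    calc (1 - Real.exp (-(l * v))) ^ 2 * v ^ (2 * H - 3)
        ≤ (l * v) ^ 2 * v ^ (2 * H - 3) :=
          mul_le_mul_of_nonneg_right h1 (Real.rpow_nonneg hv0.le _)
      _ = l ^ 2 * v ^ (2 * H - 1) := by rw [mul_pow, mul_assoc, h2]
  · apply Integrable.mono (integrableOn_Ioi_rpow_of_lt (show 2*H-3 < -1 by linarith) zero_lt_one)
      hmeas.aestronglyMeasurable.restrict
    filter_upwards [ae_restrict_mem measurableSet_Ioi] with v hv
    have hv0 : (0:ℝ) < v := lt_trans zero_lt_one hv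
    have hf0 : 0 ≤ (1 - Real.exp (-(l * v))) ^ 2 * v ^ (2 * H - 3) :=
      mul_nonneg (sq_nonneg _) (Real.rpow_nonneg hv0.le _)
    rw [Real.norm_eq_abs, Real.norm_eq_abs, abs_of_nonneg hf0,
      abs_of_nonneg (Real.rpow_nonneg hv0.le _)]
    have h1 : (1 - Real.exp (-(l * v))) ^ 2 ≤ 1 := by
      have h0 := one_sub_exp_nonneg (show 0 ≤ l*v by positivity)
      have h1' : 1 - Real.exp (-(l * v)) ≤ 1 := by
        have := Real.exp_nonneg (-(l*v)); linarith
      nlinarith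
    nlinarith [Real.rpow_nonneg hv0.le (2*H-3)]

/-- Scaling identity for the integral of `(1 - e^{-λv})² v^{2H-3}` on `(0,∞)`. -/
lemma glScale {H l : ℝ} (hl : 0 < l) :
    ∫ v in Set.Ioi (0:ℝ), (1 - Real.exp (-(l * v))) ^ 2 * v ^ (2 * H - 3)
      = l ^ (3 - 2*H) * l⁻¹ *
        ∫ v in Set.Ioi (0:ℝ), (1 - Real.exp (-(1 * v))) ^ 2 * v ^ (2 * H - 3) := by
  have h1 : EqOn (fun v : ℝ => (1 - Real.exp (-(l * v))) ^ 2 * v ^ (2 * H - 3))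
      (fun v => l ^ (3 - 2*H) * ((1 - Real.exp (-(1 * (l * v)))) ^ 2 * (l * v) ^ (2 * H - 3)))
      (Set.Ioi 0) := by
    intro v hv
    have hv0 : (0:ℝ) < v := hv
    simp only
    rw [one_mul, Real.mul_rpow hl.le hv0.le]
    have hpow : l ^ (3 - 2*H) * l ^ (2*H - 3) = 1 := by
      rw [← Real.rpow_add hl]; norm_num
    linear_combination ((1 - Real.exp (-(l * v))) ^ 2 * v ^ (2 * H - 3)) * hpow.symm
  rw [setIntegral_congr_fun measurableSet_Ioi h1, MeasureTheory.integral_const_mul,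
    integral_comp_mul_left_Ioi (fun x => (1 - Real.exp (-(1 * x))) ^ 2 * x ^ (2 * H - 3)) 0 hl,
    mul_zero]
  simp only [smul_eq_mul]
  ring

/-- The basic exponential integral bound `∫_a^t e^{-λ(t-τ)} dτ ≤ 1/λ`, in `ℝ≥0∞` form. -/
lemma expBound {l t : ℝ} (hl : 0 < l) (a : ℝ) :
    (∫⁻ τ in Set.Ioc a t, ENNReal.ofReal (Real.exp (-(l * (t - τ))))) ≤ ENNReal.ofReal l⁻¹ := by
  rcases le_or_gt t a with h | h
  · rw [Set.Ioc_eq_empty (not_lt.mpr h), Measure.restrict_empty, lintegral_zero_measure]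
    exact zero_le
  · have hc : Continuous fun τ : ℝ => Real.exp (-(l * (t - τ))) := by continuity
    have hint : IntegrableOn (fun τ : ℝ => Real.exp (-(l * (t - τ)))) (Set.Ioc a t) :=
      hc.integrableOn_Ioc
    rw [← ofReal_integral_eq_lintegral_ofReal hint
      (ae_of_all _ fun τ => Real.exp_nonneg _)]
    apply ENNReal.ofReal_le_ofReal
    rw [← intervalIntegral.integral_of_le h.le]
    have hrw : ∀ τ : ℝ, Real.exp (-(l * (t - τ))) = Real.exp (l * τ) * Real.exp (-(l * t)) := by
      intro τ; rw [← Real.exp_add]; congr 1; ring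
    simp_rw [hrw]
    rw [intervalIntegral.integral_mul_const]
    have h2 : (∫ τ in a..t, Real.exp (l * τ)) = l⁻¹ * (Real.exp (l * t) - Real.exp (l * a)) := by
      rw [intervalIntegral.integral_comp_mul_left (fun x => Real.exp x) hl.ne',
        integral_exp, smul_eq_mul]
    rw [h2]
    have h3 : (Real.exp (l * t) - Real.exp (l * a)) * Real.exp (-(l * t)) ≤ 1 := by
      rw [sub_mul, ← Real.exp_add, ← Real.exp_add, add_neg_cancel, Real.exp_zero]
      have := Real.exp_nonneg (l * a + -(l * t))
      linarith
    calc l⁻¹ * (Real.exp (l * t) - Real.exp (l * a)) * Real.exp (-(l * t))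
        = l⁻¹ * ((Real.exp (l * t) - Real.exp (l * a)) * Real.exp (-(l * t))) := by ring
      _ ≤ l⁻¹ * 1 := mul_le_mul_of_nonneg_left h3 (inv_nonneg.2 hl.le)
      _ = l⁻¹ := mul_one _

/-- Pointwise Cauchy–Schwarz step. -/
lemma csStep {H l t : ℝ} (hl : 0 < l) (s : ℝ)
    (hE : (∫⁻ τ in Set.Ioc s t, ENNReal.ofReal (Real.exp (-(l * (t - τ))))) ≤ ENNReal.ofReal l⁻¹) :
    ENNReal.ofReal ((∫ τ in Set.Ioc s t, Real.exp (-(l * (t - τ))) * psif H l (τ - s)) ^ 2)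
      ≤ ENNReal.ofReal l⁻¹ *
        ∫⁻ τ in Set.Ioc s t, ENNReal.ofReal (Real.exp (-(l * (t - τ))) * psif H l (τ - s) ^ 2) := by
  set A := Set.Ioc s t with hA
  have hq0 : ∀ τ ∈ A, 0 ≤ psif H l (τ - s) := fun τ hτ =>
    psif_nonneg hl.le (by have := hτ.1; linarith)
  have hG0 : 0 ≤ ∫ τ in A, Real.exp (-(l * (t - τ))) * psif H l (τ - s) :=
    setIntegral_nonneg measurableSet_Ioc fun τ hτ =>
      mul_nonneg (Real.exp_nonneg _) (hq0 τ hτ)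
  have step2 : ENNReal.ofReal (∫ τ in A, Real.exp (-(l * (t - τ))) * psif H l (τ - s))
      ≤ ∫⁻ τ in A, ENNReal.ofReal (Real.exp (-(l * (t - τ))) * psif H l (τ - s)) := by
    by_cases hi : IntegrableOn (fun τ => Real.exp (-(l * (t - τ))) * psif H l (τ - s)) A volume
    · rw [ofReal_integral_eq_lintegral_ofReal hi ((ae_restrict_iff' measurableSet_Ioc).2
        (ae_of_all _ fun τ hτ => mul_nonneg (Real.exp_nonneg _) (hq0 τ hτ)))]
    · rw [integral_undef hi]; simp
  set f : ℝ → ℝ≥0∞ := fun τ => ENNReal.ofReal (Real.exp (-(l * (t - τ)))) ^ (1/2 : ℝ) with hf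
  set g : ℝ → ℝ≥0∞ := fun τ =>
    ENNReal.ofReal (Real.exp (-(l * (t - τ)))) ^ (1/2 : ℝ) * ENNReal.ofReal (psif H l (τ - s))
    with hg
  have hfg : ∀ τ, ENNReal.ofReal (Real.exp (-(l * (t - τ))) * psif H l (τ - s)) = (f * g) τ := by
    intro τ
    rw [ENNReal.ofReal_mul (Real.exp_nonneg _)]
    calc ENNReal.ofReal (Real.exp (-(l * (t - τ)))) * ENNReal.ofReal (psif H l (τ - s))
        = (ENNReal.ofReal (Real.exp (-(l * (t - τ)))) ^ (1/2:ℝ)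
            * ENNReal.ofReal (Real.exp (-(l * (t - τ)))) ^ (1/2:ℝ))
            * ENNReal.ofReal (psif H l (τ - s)) := by
          rw [← ENNReal.rpow_add_of_nonneg _ _ (by norm_num) (by norm_num)]; norm_num
      _ = (f * g) τ := by rw [Pi.mul_apply, hf, hg]; ring
  have hmp : Measurable fun τ : ℝ => Real.exp (-(l * (t - τ))) :=
    ((measurable_const.sub measurable_id).const_mul l).neg.exp
  have hmψ : Measurable fun τ : ℝ => psif H l (τ - s) :=
    (psif_meas H l).comp (measurable_id.sub_const s)
  have hmf : AEMeasurable f (volume.restrict A) :=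
    (hmp.ennreal_ofReal.pow_const _).aemeasurable
  have hmg : AEMeasurable g (volume.restrict A) :=
    ((hmp.ennreal_ofReal.pow_const _).mul hmψ.ennreal_ofReal).aemeasurable
  have hHo := ENNReal.lintegral_mul_le_Lp_mul_Lq (volume.restrict A)
    Real.HolderConjugate.two_two hmf hmg
  have hhalf : ∀ y : ℝ≥0∞, (y ^ (1/2:ℝ)) ^ 2 = y := fun y => by
    rw [sq, ← ENNReal.rpow_add_of_nonneg _ _ (by norm_num) (by norm_num)]; norm_num
  have hhalfR : ∀ y : ℝ≥0∞, (y ^ (1/2:ℝ)) ^ (2:ℝ) = y := fun y => by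
    rw [← ENNReal.rpow_mul]; norm_num
  have hf2 : (∫⁻ τ in A, f τ ^ (2:ℝ)) ≤ ENNReal.ofReal l⁻¹ := by
    have : ∀ τ, f τ ^ (2:ℝ) = ENNReal.ofReal (Real.exp (-(l * (t - τ)))) := fun τ => hhalfR _
    rw [lintegral_congr this]; exact hE
  have hg2 : (∫⁻ τ in A, g τ ^ (2:ℝ))
      ≤ ∫⁻ τ in A, ENNReal.ofReal (Real.exp (-(l * (t - τ))) * psif H l (τ - s) ^ 2) := by
    apply le_of_eq
    apply setLIntegral_congr_fun_ae measurableSet_Ioc (ae_of_all _ fun τ hτ => ?_)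
    rw [hg]
    rw [ENNReal.mul_rpow_of_nonneg _ _ (by norm_num : (0:ℝ) ≤ 2), hhalfR]
    rw [ENNReal.ofReal_mul (Real.exp_nonneg _)]
    congr 1
    rw [ENNReal.ofReal_pow (hq0 τ hτ), show ((2:ℝ)) = ((2:ℕ):ℝ) by norm_num,
      ENNReal.rpow_natCast]
  calc ENNReal.ofReal ((∫ τ in A, Real.exp (-(l * (t - τ))) * psif H l (τ - s)) ^ 2)
      = ENNReal.ofReal (∫ τ in A, Real.exp (-(l * (t - τ))) * psif H l (τ - s)) ^ 2 := by
        rw [sq, sq, ENNReal.ofReal_mul hG0]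
    _ ≤ (∫⁻ τ in A, ENNReal.ofReal (Real.exp (-(l * (t - τ))) * psif H l (τ - s))) ^ 2 :=
        pow_le_pow_left' step2 2
    _ = (∫⁻ τ in A, (f * g) τ) ^ 2 := by rw [lintegral_congr hfg]
    _ ≤ ((∫⁻ τ in A, f τ ^ (2:ℝ)) ^ (1/(2:ℝ)) * (∫⁻ τ in A, g τ ^ (2:ℝ)) ^ (1/(2:ℝ))) ^ 2 :=
        pow_le_pow_left' hHo 2
    _ = (∫⁻ τ in A, f τ ^ (2:ℝ)) * (∫⁻ τ in A, g τ ^ (2:ℝ)) := by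
        rw [mul_pow, hhalf, hhalf]
    _ ≤ ENNReal.ofReal l⁻¹ *
        ∫⁻ τ in A, ENNReal.ofReal (Real.exp (-(l * (t - τ))) * psif H l (τ - s) ^ 2) :=
        mul_le_mul' hf2 hg2

/-- Tonelli step. -/
lemma tonStep {H l t : ℝ} {V : ℝ}
    (hE : ∀ a : ℝ, (∫⁻ τ in Set.Ioc a t, ENNReal.ofReal (Real.exp (-(l * (t - τ)))))
        ≤ ENNReal.ofReal l⁻¹)
    (hKey : (∫⁻ u in Set.Ioi (0:ℝ), ENNReal.ofReal (psif H l u ^ 2)) = ENNReal.ofReal V) :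
    (∫⁻ s in Set.Ioc (0:ℝ) t, ∫⁻ τ in Set.Ioc s t,
        ENNReal.ofReal (Real.exp (-(l * (t - τ))) * psif H l (τ - s) ^ 2))
      ≤ ENNReal.ofReal V * ENNReal.ofReal l⁻¹ := by
  have hmp : Measurable fun τ : ℝ => Real.exp (-(l * (t - τ))) :=
    ((measurable_const.sub measurable_id).const_mul l).neg.exp
  set Fi : ℝ → ℝ → ℝ≥0∞ := fun s τ =>
    ENNReal.ofReal (Real.exp (-(l * (t - τ))) * psif H l (τ - s) ^ 2) with hFi
  have hmFi : Measurable fun p : ℝ × ℝ => Fi p.1 p.2 := by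
    apply Measurable.ennreal_ofReal
    exact (hmp.comp measurable_snd).mul
      (((psif_meas H l).comp (measurable_snd.sub measurable_fst)).pow_const 2)
  have hsetE : ∀ s ∈ Set.Ioc (0:ℝ) t, Set.Ioi s ∩ Set.Ioc 0 t = Set.Ioc s t := by
    intro s hs
    ext τ
    simp only [Set.mem_inter_iff, Set.mem_Ioi, Set.mem_Ioc]
    constructor
    · rintro ⟨h1, _, h3⟩; exact ⟨h1, h3⟩
    · rintro ⟨h1, h2⟩; exact ⟨h1, lt_trans hs.1 h1, h2⟩
  have hrw1 : (∫⁻ s in Set.Ioc (0:ℝ) t, ∫⁻ τ in Set.Ioc s t, Fi s τ)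
      = ∫⁻ s in Set.Ioc (0:ℝ) t, ∫⁻ τ in Set.Ioc (0:ℝ) t, (Set.Ioi s).indicator (Fi s) τ := by
    apply setLIntegral_congr_fun_ae measurableSet_Ioc (ae_of_all _ fun s hs => ?_)
    rw [setLIntegral_indicator measurableSet_Ioi, hsetE s hs]
  have hswap : (∫⁻ s in Set.Ioc (0:ℝ) t, ∫⁻ τ in Set.Ioc (0:ℝ) t, (Set.Ioi s).indicator (Fi s) τ)
      = ∫⁻ τ in Set.Ioc (0:ℝ) t, ∫⁻ s in Set.Ioc (0:ℝ) t, (Set.Ioi s).indicator (Fi s) τ := by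
    apply lintegral_lintegral_swap
    have : (Function.uncurry fun s τ => (Set.Ioi s).indicator (Fi s) τ)
        = ({p : ℝ × ℝ | p.1 < p.2}).indicator (fun p => Fi p.1 p.2) := by
      funext p
      rcases p with ⟨s, τ⟩
      simp only [Function.uncurry, Set.indicator_apply, Set.mem_Ioi, Set.mem_setOf_eq]
    rw [this]
    exact (hmFi.indicator (measurableSet_lt measurable_fst measurable_snd)).aemeasurable
  rw [hrw1, hswap]
  have hpoint : ∀ τ : ℝ, (∫⁻ s in Set.Ioc (0:ℝ) t, (Set.Ioi s).indicator (Fi s) τ)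
      ≤ ENNReal.ofReal (Real.exp (-(l * (t - τ)))) * ENNReal.ofReal V := by
    intro τ
    have h1 : (fun s => (Set.Ioi s).indicator (Fi s) τ)
        = (Set.Iio τ).indicator (fun s => Fi s τ) := by
      funext s
      simp only [Set.indicator_apply, Set.mem_Ioi, Set.mem_Iio]
    calc (∫⁻ s in Set.Ioc (0:ℝ) t, (Set.Ioi s).indicator (Fi s) τ)
        = ∫⁻ s in Set.Iio τ ∩ Set.Ioc 0 t, Fi s τ := by
          rw [h1, setLIntegral_indicator measurableSet_Iio]
      _ ≤ ∫⁻ s in Set.Iio τ, Fi s τ := lintegral_mono_set Set.inter_subset_left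
      _ = ∫⁻ s in Set.Iio τ, ENNReal.ofReal (Real.exp (-(l * (t - τ))))
            * ENNReal.ofReal (psif H l (τ - s) ^ 2) := by
          apply lintegral_congr fun s => ?_
          rw [hFi]
          exact ENNReal.ofReal_mul (Real.exp_nonneg _)
      _ = ENNReal.ofReal (Real.exp (-(l * (t - τ))))
            * ∫⁻ s in Set.Iio τ, ENNReal.ofReal (psif H l (τ - s) ^ 2) :=
          lintegral_const_mul' _ _ ENNReal.ofReal_ne_top
      _ = ENNReal.ofReal (Real.exp (-(l * (t - τ)))) * ENNReal.ofReal V := by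
          congr 1
          have hpre : (fun s : ℝ => τ - s) ⁻¹' (Set.Ioi 0) = Set.Iio τ := by
            ext s; simp [sub_pos]
          have hmm : Measurable fun u : ℝ => ENNReal.ofReal (psif H l u ^ 2) :=
            ((psif_meas H l).pow_const 2).ennreal_ofReal
          rw [← hKey, ← hpre,
            (Measure.measurePreserving_sub_left volume τ).setLIntegral_comp_preimage
              measurableSet_Ioi hmm]
  calc (∫⁻ τ in Set.Ioc (0:ℝ) t, ∫⁻ s in Set.Ioc (0:ℝ) t, (Set.Ioi s).indicator (Fi s) τ)
      ≤ ∫⁻ τ in Set.Ioc (0:ℝ) t,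
          ENNReal.ofReal (Real.exp (-(l * (t - τ)))) * ENNReal.ofReal V :=
        lintegral_mono hpoint
    _ = ENNReal.ofReal V * ∫⁻ τ in Set.Ioc (0:ℝ) t, ENNReal.ofReal (Real.exp (-(l * (t - τ)))) := by
        simp_rw [mul_comm]
        exact lintegral_const_mul' _ _ ENNReal.ofReal_ne_top
    _ ≤ ENNReal.ofReal V * ENNReal.ofReal l⁻¹ := mul_le_mul' le_rfl (hE 0)

/-- For `H ∈ (0,1/2)` there exists `C_H ∈ (0,∞)` such that for all `λ > 0` and `t ≥ 0`,
`∫₀ᵗ ( ∫ₛᵗ (e^{-λ(t-τ)} - e^{-λ(t-s)}) (τ-s)^{H-3/2} dτ )² ds ≤ C_H λ^{-2H}`. -/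
theorem stmt17 (H : ℝ) (hH : H ∈ Set.Ioo (0 : ℝ) (1/2)) :
    ∃ C : ℝ, 0 < C ∧ ∀ lam : ℝ, 0 < lam → ∀ t : ℝ, 0 ≤ t →
      (∫ s in (0:ℝ)..t,
        (∫ τ in s..t,
            (Real.exp (-(lam * (t - τ))) - Real.exp (-(lam * (t - s))))
              * (τ - s) ^ (H - 3/2)) ^ 2)
        ≤ C * lam ^ (-(2*H)) := by
  obtain ⟨hH1, hH2⟩ := hH
  set K := ∫ v in Set.Ioi (0:ℝ), (1 - Real.exp (-(1 * v))) ^ 2 * v ^ (2 * H - 3) with hKdef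
  have hK0 : 0 ≤ K :=
    setIntegral_nonneg measurableSet_Ioi fun v hv =>
      mul_nonneg (sq_nonneg _) (Real.rpow_nonneg (le_of_lt hv) _)
  refine ⟨K + 1, by positivity, fun l hl t ht => ?_⟩
  -- the value V of the key integral
  set V : ℝ := l ^ (3 - 2*H) * l⁻¹ * K with hVdef
  have hV0 : 0 ≤ V := by positivity
  -- rewrite the LHS
  rw [intervalIntegral.integral_of_le ht]
  have hinner : EqOn
      (fun s => (∫ τ in s..t,
          (Real.exp (-(l * (t - τ))) - Real.exp (-(l * (t - s)))) * (τ - s) ^ (H - 3/2)) ^ 2)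
      (fun s => (∫ τ in Set.Ioc s t, Real.exp (-(l * (t - τ))) * psif H l (τ - s)) ^ 2)
      (Set.Ioc 0 t) := by
    intro s hs
    simp only
    congr 1
    rw [intervalIntegral.integral_of_le hs.2]
    apply setIntegral_congr_fun measurableSet_Ioc
    intro τ _
    have hid : Real.exp (-(l * (t - τ))) * Real.exp (-(l * (τ - s)))
        = Real.exp (-(l * (t - s))) := by
      rw [← Real.exp_add]; congr 1; ring
    unfold psif
    linear_combination ((τ - s) ^ (H - 3/2)) * hid
  rw [setIntegral_congr_fun measurableSet_Ioc hinner]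
  -- handle non-integrable case
  by_cases hIG : Integrable
      (fun s => (∫ τ in Set.Ioc s t, Real.exp (-(l * (t - τ))) * psif H l (τ - s)) ^ 2)
      (volume.restrict (Set.Ioc 0 t))
  swap
  · rw [integral_undef hIG]; positivity
  rw [integral_eq_lintegral_of_nonneg_ae (ae_of_all _ fun s => sq_nonneg _)
    hIG.aestronglyMeasurable]
  apply ENNReal.toReal_le_of_le_ofReal (by positivity)
  -- the key value identity
  have hKey : (∫⁻ u in Set.Ioi (0:ℝ), ENNReal.ofReal (psif H l u ^ 2)) = ENNReal.ofReal V := by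
    have hcongr : ∀ u ∈ Set.Ioi (0:ℝ),
        ENNReal.ofReal (psif H l u ^ 2)
          = ENNReal.ofReal ((1 - Real.exp (-(l * u))) ^ 2 * u ^ (2 * H - 3)) := by
      intro u hu
      have hu0 : (0:ℝ) < u := hu
      congr 1
      unfold psif
      rw [mul_pow]
      congr 1
      rw [← Real.rpow_natCast (u ^ (H - 3/2)) 2, ← Real.rpow_mul hu0.le]
      congr 1
      push_cast
      ring
    rw [setLIntegral_congr_fun_ae measurableSet_Ioi (ae_of_all _ hcongr),
      ← ofReal_integral_eq_lintegral_ofReal (glInt hH1 hH2 hl)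
        ((ae_restrict_iff' measurableSet_Ioi).2 (ae_of_all _ fun v hv =>
          mul_nonneg (sq_nonneg _) (Real.rpow_nonneg (le_of_lt hv) _))),
      glScale hl, hVdef, hKdef]
  -- main estimate chain
  calc (∫⁻ s in Set.Ioc (0:ℝ) t,
        ENNReal.ofReal ((∫ τ in Set.Ioc s t, Real.exp (-(l * (t - τ))) * psif H l (τ - s)) ^ 2))
      ≤ ∫⁻ s in Set.Ioc (0:ℝ) t, ENNReal.ofReal l⁻¹ *
          ∫⁻ τ in Set.Ioc s t,
            ENNReal.ofReal (Real.exp (-(l * (t - τ))) * psif H l (τ - s) ^ 2) :=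
        lintegral_mono fun s => csStep hl s (expBound hl s)
    _ = ENNReal.ofReal l⁻¹ * ∫⁻ s in Set.Ioc (0:ℝ) t, ∫⁻ τ in Set.Ioc s t,
            ENNReal.ofReal (Real.exp (-(l * (t - τ))) * psif H l (τ - s) ^ 2) :=
        lintegral_const_mul' _ _ ENNReal.ofReal_ne_top
    _ ≤ ENNReal.ofReal l⁻¹ * (ENNReal.ofReal V * ENNReal.ofReal l⁻¹) :=
        mul_le_mul' le_rfl (tonStep (expBound hl) hKey)
    _ ≤ ENNReal.ofReal ((K + 1) * l ^ (-(2*H))) := by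
        rw [← ENNReal.ofReal_mul hV0, ← ENNReal.ofReal_mul (inv_nonneg.2 hl.le)]
        apply ENNReal.ofReal_le_ofReal
        have h4 : l⁻¹ * l⁻¹ * l⁻¹ = l ^ ((-3 : ℝ)) := by
          rw [Real.rpow_neg hl.le, show ((3:ℝ)) = ((3:ℕ):ℝ) by norm_num, Real.rpow_natCast]
          rw [pow_succ, pow_succ, pow_one, mul_inv, mul_inv]
        have h3 : l ^ (3 - 2*H) * (l⁻¹ * l⁻¹ * l⁻¹) = l ^ (-(2*H)) := by
          rw [h4, ← Real.rpow_add hl]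
          congr 1
          ring
        have hid : l⁻¹ * (V * l⁻¹) = K * l ^ (-(2*H)) := by
          rw [hVdef]
          calc l⁻¹ * (l ^ (3 - 2*H) * l⁻¹ * K * l⁻¹)
              = K * (l ^ (3 - 2*H) * (l⁻¹ * l⁻¹ * l⁻¹)) := by ring
            _ = K * l ^ (-(2*H)) := by rw [h3]
        rw [hid]
        have : (0:ℝ) ≤ l ^ (-(2*H)) := Real.rpow_nonneg hl.le _
        nlinarith
end

section
/- Let λ > 0 and Δt > 0, set t_j = jΔt for j ∈ ℕ and let ℓ(t) = ⌊t/Δt⌋ for t ≥ 0 (so t_{ℓ(t)} ≤ t < t_{ℓ(t)+1}). Then for all 0 ≤ s ≤ τ one has |e^{−λ(τ − t_{ℓ(τ)})} − e^{−λ(s − t_{ℓ(s)})}| ≤ min(1, λ(τ − s)) + 𝟙_{[t_{ℓ(s)+1}, t_{ℓ(s)+2})}(τ) · min(1, λΔt), where 𝟙_{[t_{ℓ(s)+1}, t_{ℓ(s)+2})}(τ) equals 1 if t_{ℓ(s)+1} ≤ τ < t_{ℓ(s)+2} and 0 otherwise. -/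
private lemma exp_diff_le (x y : ℝ) (hx : 0 ≤ x) (hxy : x ≤ y) :
    |Real.exp (-x) - Real.exp (-y)| ≤ min 1 (y - x) := by
  have e1 : Real.exp (-x) ≤ 1 := Real.exp_le_one_iff.mpr (by linarith)
  have e2 : Real.exp (-y) ≤ Real.exp (-x) := Real.exp_le_exp.mpr (by linarith)
  have e3 : 1 - (y - x) ≤ Real.exp (-(y - x)) := by
    have := Real.add_one_le_exp (-(y - x)); linarith
  have e4 : Real.exp (-x) * Real.exp (-(y - x)) = Real.exp (-y) := by
    rw [← Real.exp_add]; ring_nf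
  have e5 : (0:ℝ) < Real.exp (-x) := Real.exp_pos _
  have e6 : Real.exp (-(y - x)) ≤ 1 := Real.exp_le_one_iff.mpr (by linarith)
  have e7 : (0:ℝ) < Real.exp (-y) := Real.exp_pos _
  rw [abs_of_nonneg (by linarith)]
  refine le_min (by linarith) ?_
  nlinarith

private lemma exp_abs_diff_le (x y : ℝ) (hx : 0 ≤ x) (hy : 0 ≤ y) :
    |Real.exp (-x) - Real.exp (-y)| ≤ min 1 |x - y| := by
  rcases le_total x y with h | h
  · have hxy : |x - y| = y - x := by rw [abs_sub_comm]; exact abs_of_nonneg (by linarith)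
    rw [hxy]; exact exp_diff_le x y hx h
  · have hxy : |x - y| = x - y := abs_of_nonneg (by linarith)
    rw [hxy, abs_sub_comm]; exact exp_diff_le y x hy h

/-- Grid-offset estimate: for `λ, Δt > 0`, with `t_j = jΔt` and `ℓ(t) = ⌊t/Δt⌋`, one has,
for all `0 ≤ s ≤ τ`,
`|e^{-λ(τ - t_{ℓ(τ)})} - e^{-λ(s - t_{ℓ(s)})}| ≤ min(1, λ(τ-s)) + 𝟙_{[t_{ℓ(s)+1}, t_{ℓ(s)+2})}(τ) min(1, λΔt)`. -/
theorem stmt18 (lam Δt : ℝ) (hlam : 0 < lam) (hΔt : 0 < Δt) :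
    ∀ s τ : ℝ, 0 ≤ s → s ≤ τ →
      |Real.exp (-(lam * (τ - (⌊τ / Δt⌋₊ : ℝ) * Δt)))
          - Real.exp (-(lam * (s - (⌊s / Δt⌋₊ : ℝ) * Δt)))|
        ≤ min 1 (lam * (τ - s))
          + (if ((⌊s / Δt⌋₊ : ℝ) + 1) * Δt ≤ τ ∧ τ < ((⌊s / Δt⌋₊ : ℝ) + 2) * Δt
              then (1:ℝ) else 0) * min 1 (lam * Δt) := by
  intro s τ hs hsτ
  have hτ : 0 ≤ τ := le_trans hs hsτ
  set m := ⌊s / Δt⌋₊ with hm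
  set n := ⌊τ / Δt⌋₊ with hn
  -- grid facts
  have hsl : (m : ℝ) * Δt ≤ s := by
    have h := Nat.floor_le (div_nonneg hs hΔt.le)
    calc (m : ℝ) * Δt ≤ (s / Δt) * Δt := mul_le_mul_of_nonneg_right h hΔt.le
      _ = s := by field_simp
  have hsu : s < ((m : ℝ) + 1) * Δt := by
    have h := Nat.lt_floor_add_one (s / Δt)
    calc s = (s / Δt) * Δt := by field_simp
      _ < ((m : ℝ) + 1) * Δt := by
          exact mul_lt_mul_of_pos_right h hΔt
  have hτl : (n : ℝ) * Δt ≤ τ := by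
    have h := Nat.floor_le (div_nonneg hτ hΔt.le)
    calc (n : ℝ) * Δt ≤ (τ / Δt) * Δt := mul_le_mul_of_nonneg_right h hΔt.le
      _ = τ := by field_simp
  have hτu : τ < ((n : ℝ) + 1) * Δt := by
    have h := Nat.lt_floor_add_one (τ / Δt)
    calc τ = (τ / Δt) * Δt := by field_simp
      _ < ((n : ℝ) + 1) * Δt := mul_lt_mul_of_pos_right h hΔt
  have hmn : m ≤ n := Nat.floor_le_floor (div_le_div_of_nonneg_right hsτ hΔt.le)
  -- offsets
  set A : ℝ := τ - (n : ℝ) * Δt with hA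
  set B : ℝ := s - (m : ℝ) * Δt with hB
  have hA0 : 0 ≤ A := by simp [hA]; linarith
  have hA1 : A < Δt := by simp [hA]; nlinarith
  have hB0 : 0 ≤ B := by simp [hB]; linarith
  have hB1 : B < Δt := by simp [hB]; nlinarith
  have key : |Real.exp (-(lam * A)) - Real.exp (-(lam * B))| ≤ min 1 (lam * |A - B|) := by
    have := exp_abs_diff_le (lam * A) (lam * B)
      (mul_nonneg hlam.le hA0) (mul_nonneg hlam.le hB0)
    have habs : |lam * A - lam * B| = lam * |A - B| := by
      rw [← mul_sub, abs_mul, abs_of_pos hlam]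
    rwa [habs] at this
  have hmin1 : (0:ℝ) ≤ min 1 (lam * (τ - s)) :=
    le_min zero_le_one (mul_nonneg hlam.le (by linarith))
  have hmin2 : (0:ℝ) ≤ min 1 (lam * Δt) :=
    le_min zero_le_one (mul_nonneg hlam.le hΔt.le)
  have hmnr : (m : ℝ) ≤ (n : ℝ) := Nat.cast_le.mpr hmn
  rcases lt_trichotomy n (m + 1) with hc | hc | hc
  · -- n = m
    have hnm : n = m := le_antisymm (Nat.lt_succ_iff.mp hc) hmn
    have hAB : A - B = τ - s := by rw [hA, hB, hnm]; ring
    rw [if_neg, zero_mul, add_zero]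
    · refine key.trans ?_
      rw [hAB, abs_of_nonneg (by linarith)]
    · rintro ⟨h1, _⟩
      have : ((m:ℝ) + 1) * Δt ≤ τ := h1
      rw [hnm] at hτu
      linarith
  · -- n = m + 1 : indicator is on
    have hnr : (n : ℝ) = (m : ℝ) + 1 := by exact_mod_cast congrArg (Nat.cast (R := ℝ)) hc
    rw [if_pos ⟨by rw [← hnr]; exact hτl, by
        have : ((n:ℝ) + 1) * Δt = ((m:ℝ) + 2) * Δt := by rw [hnr]; ring
        linarith⟩, one_mul]
    refine key.trans ?_
    have hAB : A - B = τ - s - Δt := by rw [hA, hB, hnr]; ring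
    rcases le_total 0 (A - B) with h | h
    · have : |A - B| ≤ τ - s := by rw [abs_of_nonneg h, hAB]; linarith
      have : min 1 (lam * |A - B|) ≤ min 1 (lam * (τ - s)) := by
        exact min_le_min le_rfl (mul_le_mul_of_nonneg_left this hlam.le)
      linarith
    · have : |A - B| ≤ Δt := by rw [abs_of_nonpos h, hAB]; linarith
      have : min 1 (lam * |A - B|) ≤ min 1 (lam * Δt) := by
        exact min_le_min le_rfl (mul_le_mul_of_nonneg_left this hlam.le)
      linarith
  · -- n ≥ m + 2 : indicator off, τ - s > Δt
    have hn2 : (m : ℝ) + 2 ≤ (n : ℝ) := by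
      have : m + 2 ≤ n := hc
      exact_mod_cast this
    have hgap : Δt ≤ τ - s := by nlinarith
    rw [if_neg, zero_mul, add_zero]
    · refine key.trans (min_le_min le_rfl ?_)
      have : |A - B| ≤ Δt := by
        rw [abs_sub_le_iff]; constructor <;> linarith
      nlinarith
    · rintro ⟨_, h2⟩
      have : ((m:ℝ) + 2) * Δt ≤ (n:ℝ) * Δt := mul_le_mul_of_nonneg_right hn2 hΔt.le
      linarith
end
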